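/- arXiv:2407.08695 — 9 statements merged into one kernel-verified Lean document; each statement's English description precedes it below -/
import Mathlib

section
/- For any n ≥ 1, any nonnegative integer d with d+1 ≤ n, and Boolean variables x₁,…,xₙ ∈ {0,1}: x₁ ⊕ ⋯ ⊕ xₙ ≡ Σ_{k=1}^{d+1} Σ_{α₁<⋯<α_k} (-2)^{k-1} ∏_{i=1}^{k} x_{α_i} (mod 2^{d+1}). -/
open Finset

private lemma pow2_dvd_neg2 (a b : ℕ) (h : a ≤ b) : (2:ℤ)^a ∣ (-2)^b := by
  rw [neg_pow]
  exact Dvd.dvd.mul_left (pow_dvd_pow 2 h) _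

private lemma key_arith (m d : ℕ) :
    ((m:ℤ) % 2) ≡ ∑ k ∈ Icc 1 (d+1), (m.choose k : ℤ) * (-2)^(k-1) [ZMOD 2^(d+1)] := by
  set S : ℤ := ∑ k ∈ Icc 1 (d+1), (m.choose k : ℤ) * (-2)^(k-1) with hS
  have hr : (-1:ℤ)^m = 1 - 2 * ((m:ℤ) % 2) := by
    rcases Nat.even_or_odd m with he | ho
    · rw [he.neg_one_pow]
      have := Nat.even_iff.mp he
      omega
    · rw [ho.neg_one_pow]
      have := Nat.odd_iff.mp ho
      omega
  have hbin : ∑ k ∈ range (max (m+1) (d+2)), (m.choose k : ℤ) * (-2)^k = (-1)^m := by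
    rw [← Finset.sum_subset (Finset.range_subset_range.mpr (le_max_left (m+1) (d+2)))]
    · rw [show ((-1:ℤ))^m = ((-2)+1)^m by norm_num, add_pow]
      exact Finset.sum_congr rfl fun k _ => by ring
    · intro k hk hk2
      have hmk : m < k := by
        simp only [mem_range] at hk hk2; omega
      simp [Nat.choose_eq_zero_of_lt hmk]
  have hdvd1 : (2:ℤ)^(d+2) ∣ (-1)^m - ∑ k ∈ range (d+2), (m.choose k : ℤ) * (-2)^k := by
    rw [← hbin, ← Finset.sum_Ico_eq_sub _ (le_max_right (m+1) (d+2))]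
    apply Finset.dvd_sum
    intro k hk
    exact Dvd.dvd.mul_left (pow2_dvd_neg2 _ _ (Finset.mem_Ico.mp hk).1) _
  have eS : S = ∑ k ∈ range (d+1), (m.choose (1+k) : ℤ) * (-2)^(1+k-1) := by
    rw [hS, ← Finset.Ico_add_one_right_eq_Icc, Finset.sum_Ico_eq_sum_range]
    simp
  have h2S : -2 * S = ∑ k ∈ range (d+2), (m.choose k : ℤ) * (-2)^k - 1 := by
    rw [Finset.sum_range_succ' (fun k => (m.choose k:ℤ)*(-2)^k) (d+1), eS, Finset.mul_sum]
    have hterm : ∀ k, (-2:ℤ) * ((m.choose (1+k):ℤ) * (-2)^(1+k-1))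
        = (m.choose (k+1):ℤ) * (-2)^(k+1) := by
      intro k
      rw [show 1+k-1 = k from by omega, show 1+k = k+1 from by omega]
      ring
    rw [Finset.sum_congr rfl (fun k _ => hterm k)]
    norm_num
  have hz : (-1:ℤ)^m - 1 + 2*((m:ℤ)%2) = 0 := by rw [hr]; ring
  have hdvd2 : (2:ℤ)^(d+2) ∣ -2 * (S - ((m:ℤ) % 2)) := by
    have heq : -2 * (S - ((m:ℤ) % 2)) =
        ((∑ k ∈ range (d+2), (m.choose k : ℤ) * (-2)^k) - (-1)^m)
        + ((-1:ℤ)^m - 1 + 2*((m:ℤ)%2)) := by linear_combination h2S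
    rw [heq, hz, add_zero]
    have := dvd_neg.mpr hdvd1
    rwa [neg_sub] at this
  have hdvd3 : (2:ℤ)^(d+1) ∣ S - ((m:ℤ) % 2) := by
    have h2 : (2:ℤ)^(d+2) = 2 * 2^(d+1) := by ring
    have hm : -2 * (S - ((m:ℤ) % 2)) = 2 * (-(S - ((m:ℤ) % 2))) := by ring
    rw [h2, hm] at hdvd2
    have := (mul_dvd_mul_iff_left (two_ne_zero (α := ℤ))).mp hdvd2
    exact (dvd_neg.mp this)
  exact (Int.modEq_iff_dvd.mpr hdvd3)

open Finset in
theorem stmt_3 (n d : ℕ) (hn : 1 ≤ n) (hd : d + 1 ≤ n) (x : Fin n → ℤ)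
    (hx : ∀ i, x i = 0 ∨ x i = 1) :
    (∑ i, x i) % 2 ≡
      ∑ s ∈ Finset.univ.powerset.filter
          (fun s : Finset (Fin n) => s.Nonempty ∧ s.card ≤ d + 1),
        (-2) ^ (s.card - 1) * ∏ i ∈ s, x i [ZMOD (2 ^ (d + 1))] := by
  classical
  set T : Finset (Fin n) := univ.filter (fun i => x i = 1) with hT
  have hsum : (∑ i, x i) = (T.card : ℤ) := by
    rw [← Finset.sum_subset (Finset.subset_univ T) (fun i _ hi => ?_)]
    · calc ∑ i ∈ T, x i = ∑ i ∈ T, (1:ℤ) :=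
            Finset.sum_congr rfl (fun i hi => (Finset.mem_filter.mp hi).2)
        _ = (T.card : ℤ) := by simp
    · rcases hx i with h0 | h1
      · exact h0
      · exact absurd (Finset.mem_filter.mpr ⟨Finset.mem_univ i, h1⟩) hi
  have hprod : ∀ s : Finset (Fin n), (∏ i ∈ s, x i) = if s ⊆ T then 1 else 0 := by
    intro s
    split_ifs with h
    · exact Finset.prod_eq_one (fun i hi => (Finset.mem_filter.mp (h hi)).2)
    · obtain ⟨i, hi, hni⟩ := Finset.not_subset.mp h
      refine Finset.prod_eq_zero hi ?_
      rcases hx i with h0 | h1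
      · exact h0
      · exact absurd (Finset.mem_filter.mpr ⟨Finset.mem_univ i, h1⟩) hni
  have hRHS : (∑ s ∈ Finset.univ.powerset.filter
          (fun s : Finset (Fin n) => s.Nonempty ∧ s.card ≤ d + 1),
        (-2:ℤ) ^ (s.card - 1) * ∏ i ∈ s, x i)
      = ∑ s ∈ T.powerset.filter (fun s => s.Nonempty ∧ s.card ≤ d + 1),
          (-2:ℤ) ^ (s.card - 1) := by
    have hset : (Finset.univ.powerset.filter
          (fun s : Finset (Fin n) => s.Nonempty ∧ s.card ≤ d + 1)).filter (· ⊆ T)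
        = T.powerset.filter (fun s => s.Nonempty ∧ s.card ≤ d + 1) := by
      ext s
      simp only [Finset.mem_filter, Finset.mem_powerset, Finset.subset_univ, true_and]
      tauto
    calc (∑ s ∈ Finset.univ.powerset.filter
          (fun s : Finset (Fin n) => s.Nonempty ∧ s.card ≤ d + 1),
        (-2:ℤ) ^ (s.card - 1) * ∏ i ∈ s, x i)
        = ∑ s ∈ Finset.univ.powerset.filter
          (fun s : Finset (Fin n) => s.Nonempty ∧ s.card ≤ d + 1),
          (if s ⊆ T then (-2:ℤ) ^ (s.card - 1) else 0) := by
          refine Finset.sum_congr rfl (fun s _ => ?_)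
          rw [hprod s]
          split_ifs <;> ring
      _ = _ := by rw [← Finset.sum_filter, hset]
  have hQ : T.powerset.filter (fun s => s.Nonempty ∧ s.card ≤ d + 1)
      = (Icc 1 (d+1)).biUnion (fun k => Finset.powersetCard k T) := by
    ext s
    simp only [Finset.mem_filter, Finset.mem_powerset, Finset.mem_biUnion,
      Finset.mem_Icc, Finset.mem_powersetCard, ← Finset.one_le_card]
    constructor
    · rintro ⟨h1, h2, h3⟩
      exact ⟨s.card, ⟨h2, h3⟩, h1, rfl⟩
    · rintro ⟨k, ⟨hk1, hk2⟩, h1, rfl⟩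
      exact ⟨h1, hk1, hk2⟩
  have hdisj : ((Icc 1 (d+1) : Finset ℕ) : Set ℕ).PairwiseDisjoint
      (fun k => Finset.powersetCard k T) := by
    intro a _ b _ hab
    simp only [Function.onFun, Finset.disjoint_left]
    intro s hsa hsb
    exact hab ((Finset.mem_powersetCard.mp hsa).2.symm.trans
      (Finset.mem_powersetCard.mp hsb).2)
  have hinner : ∀ k, (∑ s ∈ Finset.powersetCard k T, (-2:ℤ) ^ (s.card - 1))
      = (T.card.choose k : ℤ) * (-2) ^ (k - 1) := by
    intro k
    rw [Finset.sum_congr rfl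
        (fun s hs => by rw [(Finset.mem_powersetCard.mp hs).2]),
      Finset.sum_const, Finset.card_powersetCard, nsmul_eq_mul]
  rw [hsum, hRHS, hQ, Finset.sum_biUnion hdisj]
  rw [Finset.sum_congr rfl (fun k _ => hinner k)]
  exact key_arith T.card d
end

section
/- For a ∈ ℤ and Boolean variables x₁,…,xₙ ∈ {0,1}: a·(x₁ ⊕ ⋯ ⊕ xₙ) ≡ a·(Σ_α x_α − 2·Σ_{α<β} x_α x_β + 4·Σ_{α<β<γ} x_α x_β x_γ) (mod 8). -/
open Finset in
lemma key_aux (k : ℕ) : ((k : ℤ) % 2) ≡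
    (k : ℤ) - 2 * (k.choose 2 : ℤ) + 4 * (k.choose 3 : ℤ) [ZMOD 8] := by
  induction k using Nat.twoStepInduction with
  | zero => decide
  | one => decide
  | more k ih _ =>
    have h2 : (k+2).choose 2 = k.choose 2 + (2*k+1) := by
      simp [Nat.choose_succ_succ, Nat.choose_one_right]; omega
    have h3 : (k+2).choose 3 = k.choose 3 + 2*k.choose 2 + k := by
      simp [Nat.choose_succ_succ, Nat.choose_one_right]; omega
    show ((k+2 : ℕ) : ℤ) % 2 ≡ ((k+2:ℕ) : ℤ) - 2 * (((k+2:ℕ).choose 2 : ℤ))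
        + 4 * (((k+2:ℕ).choose 3 : ℤ)) [ZMOD 8]
    rw [h2, h3]
    push_cast
    calc ((k:ℤ)+2) % 2 = (k:ℤ) % 2 := by omega
      _ ≡ (k:ℤ) - 2 * (k.choose 2 : ℤ) + 4 * (k.choose 3 : ℤ) [ZMOD 8] := ih
      _ ≡ (k:ℤ)+2 - 2*((k.choose 2:ℤ)+(2*(k:ℤ)+1)) + 4*((k.choose 3:ℤ)+2*(k.choose 2:ℤ)+(k:ℤ)) [ZMOD 8] := by
          rw [Int.ModEq]
          have : ((k:ℤ)+2) - 2*((k.choose 2:ℤ)+(2*(k:ℤ)+1)) + 4*((k.choose 3:ℤ)+2*(k.choose 2:ℤ)+(k:ℤ))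
              = ((k:ℤ) - 2*(k.choose 2:ℤ) + 4*(k.choose 3:ℤ)) + 8*(k.choose 2:ℤ) := by ring
          rw [this, Int.add_mul_emod_self_left]

open Finset in
lemma prod_aux (n : ℕ) (x : Fin n → ℤ) (hx : ∀ i, x i = 0 ∨ x i = 1) (m : ℕ) :
    ∑ s ∈ Finset.univ.powersetCard m, ∏ i ∈ s, x i
      = ((Finset.univ.filter (fun i => x i = 1)).card.choose m : ℤ) := by
  set T := Finset.univ.filter (fun i => x i = 1) with hT
  have hstep : ∀ s ∈ Finset.univ.powersetCard m, ∏ i ∈ s, x i = if s ⊆ T then 1 else 0 := by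
    intro s _
    by_cases h : s ⊆ T
    · rw [if_pos h]
      apply Finset.prod_eq_one
      intro i hi
      have := h hi
      simp [hT] at this
      exact this
    · rw [if_neg h]
      obtain ⟨i, hi, hiT⟩ := Finset.not_subset.mp h
      apply Finset.prod_eq_zero hi
      rcases hx i with h0 | h1
      · exact h0
      · exact absurd (by simp [hT, h1]) hiT
  rw [Finset.sum_congr rfl hstep, Finset.sum_boole]
  have : (Finset.univ.powersetCard m).filter (· ⊆ T) = T.powersetCard m := by
    ext s
    simp [Finset.mem_powersetCard, and_comm]
  rw [this, Finset.card_powersetCard]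

open Finset in
theorem stmt_4 (n : ℕ) (a : ℤ) (x : Fin n → ℤ)
    (hx : ∀ i, x i = 0 ∨ x i = 1) :
    a * ((∑ i, x i) % 2) ≡
      a * ((∑ i, x i)
        - 2 * ∑ s ∈ Finset.univ.powersetCard 2, ∏ i ∈ s, x i
        + 4 * ∑ s ∈ Finset.univ.powersetCard 3, ∏ i ∈ s, x i) [ZMOD 8] := by
  have hsum : ∑ i, x i = ((Finset.univ.filter (fun i => x i = 1)).card : ℤ) := by
    rw [← Finset.sum_boole]
    apply Finset.sum_congr rfl
    intro i _
    rcases hx i with h | h <;> simp [h]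
  rw [hsum, prod_aux n x hx 2, prod_aux n x hx 3]
  exact (key_aux _).mul_left a
end

section
/- Let P be an n × m matrix over 𝔽₂ (rows P_α indexed by α, columns indexed by 1..m), and let z ∈ 𝔽₂ⁿ, y ∈ 𝔽₂^m satisfy: (1) y has even Hamming weight; (2) for every α, the vector P_α ∧ y (entrywise AND) has even Hamming weight; (3) for all α < β, the vector P_α ∧ P_β ∧ y has even Hamming weight. Define P' = P ⊕ z·yᵀ (entrywise XOR with the rank-one Boolean outer product). Then for all α ≤ β ≤ γ, |P'_α ∧ P'_β ∧ P'_γ| ≡ |P_α ∧ P_β ∧ P_γ| (mod 2). -/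
/-- Hamming weight of a Boolean vector. -/
def wt {m : ℕ} (v : Fin m → Bool) : ℕ :=
  (Finset.univ.filter (fun i => v i = true)).card

private def e (b : Bool) : ZMod 2 := if b then 1 else 0

private lemma wt_cast {m : ℕ} (v : Fin m → Bool) :
    ((wt v : ℕ) : ZMod 2) = ∑ i, e (v i) := by
  rw [wt, Finset.card_filter]
  push_cast
  refine Finset.sum_congr rfl fun i _ => ?_
  by_cases h : v i = true <;> simp [h, e]

private lemma wt_mod_two {m : ℕ} (v : Fin m → Bool) (h : wt v % 2 = 0) :
    (∑ i, e (v i)) = 0 := by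
  rw [← wt_cast]
  have : ((wt v : ℕ) : ZMod 2) = ((0 : ℕ) : ZMod 2) := by
    rw [ZMod.natCast_eq_natCast_iff]
    exact h
  simpa using this

theorem stmt_5 (n m : ℕ) (P : Fin n → Fin m → Bool)
    (z : Fin n → Bool) (y : Fin m → Bool)
    (h1 : wt y % 2 = 0)
    (h2 : ∀ α, wt (fun i => P α i && y i) % 2 = 0)
    (h3 : ∀ α β, α < β → wt (fun i => P α i && P β i && y i) % 2 = 0)
    (P' : Fin n → Fin m → Bool)
    (hP' : ∀ α i, P' α i = Bool.xor (P α i) (z α && y i)) :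
    ∀ α β γ : Fin n, α ≤ β → β ≤ γ →
      wt (fun i => P' α i && P' β i && P' γ i) % 2 =
      wt (fun i => P α i && P β i && P γ i) % 2 := by
  -- pair hypothesis for all pairs
  have h3' : ∀ a b : Fin n, (∑ i : Fin m, e (P a i && P b i && y i)) = 0 := by
    intro a b
    rcases lt_trichotomy a b with h | h | h
    · exact wt_mod_two _ (h3 a b h)
    · subst h
      have := wt_mod_two _ (h2 a)
      rw [← this]
      exact Finset.sum_congr rfl fun i _ => by cases P a i <;> cases y i <;> rfl
    · have := wt_mod_two _ (h3 b a h)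
      rw [← this]
      exact Finset.sum_congr rfl fun i _ =>
        by cases P a i <;> cases P b i <;> cases y i <;> rfl
  intro α β γ _ _
  suffices h : ((wt (fun i => P' α i && P' β i && P' γ i) : ℕ) : ZMod 2) =
      ((wt (fun i => P α i && P β i && P γ i) : ℕ) : ZMod 2) by
    exact (ZMod.natCast_eq_natCast_iff _ _ _).mp h
  rw [wt_cast, wt_cast]
  have key : ∀ i : Fin m,
      e (P' α i && P' β i && P' γ i) =
      e (P α i && P β i && P γ i)
      + e (z α && z β && z γ) * e (y i)
      + e (z β && z γ) * e (P α i && y i)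
      + e (z α && z γ) * e (P β i && y i)
      + e (z α && z β) * e (P γ i && y i)
      + e (z γ) * e (P α i && P β i && y i)
      + e (z β) * e (P α i && P γ i && y i)
      + e (z α) * e (P β i && P γ i && y i) := by
    intro i
    rw [hP' α i, hP' β i, hP' γ i]
    cases P α i <;> cases P β i <;> cases P γ i <;>
      cases z α <;> cases z β <;> cases z γ <;> cases y i <;> decide
  rw [Finset.sum_congr rfl fun i _ => key i]
  simp only [Finset.sum_add_distrib, ← Finset.mul_sum]
  rw [wt_mod_two _ h1, wt_mod_two _ (h2 α), wt_mod_two _ (h2 β), wt_mod_two _ (h2 γ),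
    h3' α β, h3' α γ, h3' β γ]
  ring
end

section
/- Let d ≥ 0, let P be an n × m matrix over 𝔽₂, and let z ∈ 𝔽₂ⁿ, y ∈ 𝔽₂^m satisfy |y| ≡ 0 (mod 2) and |P_{α₁} ∧ ⋯ ∧ P_{α_d} ∧ y| ≡ 0 (mod 2) for all index tuples α₁ ≤ ⋯ ≤ α_d. Then P' = P ⊕ z·yᵀ satisfies |P'_{α₁} ∧ ⋯ ∧ P'_{α_{d+1}}| ≡ |P_{α₁} ∧ ⋯ ∧ P_{α_{d+1}}| (mod 2) for all α₁ ≤ ⋯ ≤ α_{d+1}. -/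
def b2 (b : Bool) : ZMod 2 := if b then 1 else 0

lemma b2_xor (a b : Bool) : b2 (Bool.xor a b) = b2 a + b2 b := by
  cases a <;> cases b <;> decide

lemma b2_and (a b : Bool) : b2 (a && b) = b2 a * b2 b := by
  cases a <;> cases b <;> decide

lemma b2_false : b2 false = 0 := rfl
lemma b2_true : b2 true = 1 := rfl

lemma cast_zero_of_mod (k : ℕ) (h : k % 2 = 0) : (k : ZMod 2) = 0 :=
  (ZMod.natCast_eq_zero_iff k 2).mpr (Nat.dvd_of_mod_eq_zero h)

lemma sum_prod_b2 {ι κ : Type*} (A : Finset ι) (S : Finset κ) (g : κ → ι → Bool)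
    [DecidablePred fun i => ∀ j ∈ S, g j i = true] :
    ∑ i ∈ A, ∏ j ∈ S, b2 (g j i)
      = ((A.filter (fun i => ∀ j ∈ S, g j i = true)).card : ZMod 2) := by
  rw [← Finset.sum_filter_add_sum_filter_not A (fun i => ∀ j ∈ S, g j i = true)]
  have hA : ∑ i ∈ A.filter (fun i => ∀ j ∈ S, g j i = true),
      ∏ j ∈ S, b2 (g j i)
      = ((A.filter (fun i => ∀ j ∈ S, g j i = true)).card : ZMod 2) := by
    rw [Finset.sum_congr rfl (fun i hi => Finset.prod_eq_one
      (fun j hj => by simp [b2, (Finset.mem_filter.mp hi).2 j hj]))]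
    simp
  have hB : ∑ i ∈ A.filter (fun i => ¬ ∀ j ∈ S, g j i = true),
      ∏ j ∈ S, b2 (g j i) = 0 := by
    apply Finset.sum_eq_zero
    intro i hi
    have := (Finset.mem_filter.mp hi).2
    push_neg at this
    obtain ⟨j, hj, hgj⟩ := this
    exact Finset.prod_eq_zero hj (by simp [b2, hgj])
  rw [hA, hB, add_zero]

lemma key_lemma (d n m : ℕ) (P : Fin n → Fin m → Bool) (y : Fin m → Bool)
    (h1 : (Finset.univ.filter (fun i => y i = true)).card % 2 = 0)
    (h2 : ∀ α : Fin d → Fin n, Monotone α →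
      (Finset.univ.filter
        (fun i => y i = true ∧ ∀ j, P (α j) i = true)).card % 2 = 0)
    (α : Fin (d + 1) → Fin n) (hα : Monotone α)
    (S : Finset (Fin (d + 1))) (hS : S.card ≤ d) :
    ∑ i ∈ Finset.univ.filter (fun i => y i = true),
      ∏ j ∈ S, b2 (P (α j) i) = 0 := by
  rw [sum_prod_b2]
  rcases S.eq_empty_or_nonempty with rfl | hne
  · have heq : ((Finset.univ.filter (fun i => y i = true)).filter (fun i =>
        ∀ j ∈ (∅ : Finset (Fin (d+1))), P (α j) i = true))
        = Finset.univ.filter (fun i => y i = true) := by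
      apply Finset.filter_true_of_mem; intro i _; simp
    rw [heq]
    exact cast_zero_of_mod _ h1
  · have hd : 1 ≤ d := le_trans hne.card_pos hS
    set s := S.card with hs
    have hsd : s ≤ d := hS
    have hs1 : 1 ≤ s := hne.card_pos
    let e := S.orderIsoOfFin rfl
    let β : Fin d → Fin n := fun j => α (e ⟨min j.1 (s - 1), by omega⟩)
    have hβ : Monotone β := by
      intro j j' hjj
      exact hα (by
        apply (e.le_iff_le).mpr
        exact Fin.mk_le_mk.mpr (by omega) : (e _ : Fin (d+1)) ≤ e _)
    have hcond : ∀ i, (∀ j ∈ S, P (α j) i = true) ↔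
        (∀ j : Fin d, P (β j) i = true) := by
      intro i
      constructor
      · intro h j
        exact h _ (e ⟨min j.1 (s - 1), by omega⟩).2
      · intro h k hk
        obtain ⟨t, ht⟩ := e.surjective ⟨k, hk⟩
        have h1t : t.1 ≤ s - 1 := by omega
        have := h ⟨t.1, by omega⟩
        simpa [β, min_eq_left h1t, ht, Fin.eta] using this
    have heq : ((Finset.univ.filter (fun i => y i = true)).filter (fun i =>
        ∀ j ∈ S, P (α j) i = true))
        = Finset.univ.filter (fun i => y i = true ∧ ∀ j, P (β j) i = true) := by
      rw [Finset.filter_filter]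
      apply Finset.filter_congr; intro i _
      simp only [hcond]
    rw [heq]
    exact cast_zero_of_mod _ (h2 β hβ)

theorem stmt_7 (d n m : ℕ) (P : Fin n → Fin m → Bool)
    (z : Fin n → Bool) (y : Fin m → Bool)
    (h1 : (Finset.univ.filter (fun i => y i = true)).card % 2 = 0)
    (h2 : ∀ α : Fin d → Fin n, Monotone α →
      (Finset.univ.filter
        (fun i => y i = true ∧ ∀ j, P (α j) i = true)).card % 2 = 0)
    (P' : Fin n → Fin m → Bool)
    (hP' : ∀ α i, P' α i = Bool.xor (P α i) (z α && y i)) :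
    ∀ α : Fin (d + 1) → Fin n, Monotone α →
      (Finset.univ.filter (fun i => ∀ j, P' (α j) i = true)).card % 2 =
      (Finset.univ.filter (fun i => ∀ j, P (α j) i = true)).card % 2 := by
  intro α hα
  -- reduce to an equality in ZMod 2
  have main : ∑ i : Fin m, ∏ j : Fin (d+1), b2 (P' (α j) i)
      = ∑ i : Fin m, ∏ j : Fin (d+1), b2 (P (α j) i) := by
    have hfac : ∀ (j : Fin (d+1)) (i : Fin m),
        b2 (P' (α j) i) = b2 (P (α j) i) + b2 (z (α j)) * b2 (y i) := by
      intro j i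
      rw [hP', b2_xor, b2_and]
    simp only [hfac]
    rw [← Finset.sum_filter_add_sum_filter_not Finset.univ (fun i => y i = true),
        ← Finset.sum_filter_add_sum_filter_not Finset.univ (fun i => y i = true)
          (fun i => ∏ j : Fin (d+1), b2 (P (α j) i))]
    congr 1
    · -- y i = true part
      have hyt : ∀ i ∈ Finset.univ.filter (fun i => y i = true),
          ∏ j : Fin (d+1), (b2 (P (α j) i) + b2 (z (α j)) * b2 (y i))
          = ∏ j : Fin (d+1), (b2 (P (α j) i) + b2 (z (α j))) := by
        intro i hi
        have : y i = true := (Finset.mem_filter.mp hi).2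
        simp [this, b2_true]
      rw [Finset.sum_congr rfl hyt]
      -- expand the product
      have hexp : ∀ i : Fin m,
          ∏ j : Fin (d+1), (b2 (P (α j) i) + b2 (z (α j)))
          = ∑ t ∈ (Finset.univ : Finset (Fin (d+1))).powerset,
              (∏ j ∈ t, b2 (P (α j) i)) * ∏ j ∈ Finset.univ \ t, b2 (z (α j)) :=
        fun i => Finset.prod_add _ _ _
      rw [Finset.sum_congr rfl (fun i _ => hexp i), Finset.sum_comm]
      have hterm : ∀ t ∈ (Finset.univ : Finset (Fin (d+1))).powerset,
          t ≠ Finset.univ →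
          ∑ i ∈ Finset.univ.filter (fun i => y i = true),
            (∏ j ∈ t, b2 (P (α j) i)) * ∏ j ∈ Finset.univ \ t, b2 (z (α j)) = 0 := by
        intro t ht hne
        rw [← Finset.sum_mul]
        have hcard : t.card ≤ d := by
          have hsub : t ⊂ Finset.univ :=
            lt_of_le_of_ne (Finset.mem_powerset.mp ht) hne
          have := Finset.card_lt_card hsub
          simp only [Finset.card_univ, Fintype.card_fin] at this
          omega
        rw [key_lemma d n m P y h1 h2 α hα t hcard, zero_mul]
      rw [Finset.sum_eq_single_of_mem Finset.univ
        (Finset.mem_powerset.mpr le_rfl) hterm]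
      simp [Finset.sdiff_self]
    · -- y i = false part
      apply Finset.sum_congr rfl
      intro i hi
      have : ¬ y i = true := (Finset.mem_filter.mp hi).2
      have hy : y i = false := by simpa using this
      simp [hy, b2_false]
  have cast_eq : ((Finset.univ.filter (fun i => ∀ j, P' (α j) i = true)).card : ZMod 2)
      = ((Finset.univ.filter (fun i => ∀ j, P (α j) i = true)).card : ZMod 2) := by
    have e1 := sum_prod_b2 (Finset.univ : Finset (Fin m))
      (Finset.univ : Finset (Fin (d+1))) (fun j i => P' (α j) i)
    have e2 := sum_prod_b2 (Finset.univ : Finset (Fin m))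
      (Finset.univ : Finset (Fin (d+1))) (fun j i => P (α j) i)
    simp only [Finset.mem_univ, forall_true_left, true_implies] at e1 e2
    rw [← e1, ← e2]
    exact main
  exact (ZMod.natCast_eq_natCast_iff' _ _ 2).mp cast_eq
end

section
/- Let P be an n × m matrix over 𝔽₂ with m > n(n+1)/2 + 1. Then there exists an n × m' matrix P' over 𝔽₂ with m' < m such that |P'_α ∧ P'_β ∧ P'_γ| ≡ |P_α ∧ P_β ∧ P_γ| (mod 2) for all α ≤ β ≤ γ. -/
/-! Auxiliary pointwise facts about `ZMod 2`, all decidable. -/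

lemma zmod2_ne_zero : ∀ a : ZMod 2, a ≠ 0 → a = 1 := by decide

lemma zmod2_ne_one : ∀ a : ZMod 2, a ≠ 1 → a = 0 := by decide

lemma zmod2_decide_eq (x : ZMod 2) : (if x = 1 then (1 : ZMod 2) else 0) = x := by
  revert x; decide

lemma zmod2_expand : ∀ a b c z1 z2 z3 u : ZMod 2,
    (a + z1 * u) * ((b + z2 * u) * (c + z3 * u)) =
      a * (b * c) +
        (z3 * (u * (a * b)) + (z2 * (u * (a * c)) + (z1 * (u * (b * c)) +
          (z2 * (z3 * (u * (a * a))) + (z1 * (z3 * (u * (b * b))) +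
            (z1 * (z2 * (u * (c * c))) + z1 * (z2 * (z3 * u)))))))) := by decide

lemma zmod2_final : ∀ x s z1 z2 z3 : ZMod 2,
    ((s * z1) * ((s * z2) * (s * z3))) + (x + z1 * (z2 * (z3 * s))) = x := by decide

lemma zmod2_bool : ∀ a b c : Bool,
    (if (a && b && c) = true then (1 : ZMod 2) else 0) =
      (if a = true then (1 : ZMod 2) else 0) *
        ((if b = true then (1 : ZMod 2) else 0) * (if c = true then (1 : ZMod 2) else 0)) := by
  decide

lemma zmod2_cancel : ∀ a b : ZMod 2, a + (a + b) = b := by decide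

/-- Existence of a suitable kernel vector `y`, neither `0` nor all-ones. -/
lemma exists_good_y (n m : ℕ) (hm : m > n * (n + 1) / 2 + 1)
    (q : Fin n → Fin m → ZMod 2) :
    ∃ y : Fin m → ZMod 2,
      (∀ α β : Fin n, ∑ k, y k * (q α k * q β k) = 0) ∧
        y ≠ 0 ∧ y ≠ fun _ => 1 := by
  classical
  have hm2 : 2 ≤ m := le_trans (Nat.le_add_left 2 _) hm
  set L : (Fin m → ZMod 2) →ₗ[ZMod 2] (Sym2 (Fin n) → ZMod 2) :=
    { toFun := fun y => fun p =>
        Sym2.lift ⟨fun α β => ∑ k, y k * (q α k * q β k),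
          fun α β => Finset.sum_congr rfl fun k _ => by ring⟩ p
      map_add' := by
        intro x y
        funext p
        induction p using Sym2.ind with
        | _ α β =>
          simp [Sym2.lift_mk, add_mul, Finset.sum_add_distrib]
      map_smul' := by
        intro c x
        funext p
        induction p using Sym2.ind with
        | _ α β =>
          simp [Sym2.lift_mk, Finset.mul_sum, mul_assoc] } with hL
  have hker_iff : ∀ y : Fin m → ZMod 2,
      y ∈ LinearMap.ker L ↔ ∀ α β : Fin n, ∑ k, y k * (q α k * q β k) = 0 := by
    intro y
    constructor
    · intro hy α β
      have := congrFun (LinearMap.mem_ker.mp hy) (s(α, β))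
      simpa [hL, Sym2.lift_mk] using this
    · intro h
      rw [LinearMap.mem_ker]
      funext p
      induction p using Sym2.ind with
      | _ α β => simpa [hL, Sym2.lift_mk] using h α β
  -- rank-nullity
  have hrank : 2 ≤ Module.finrank (ZMod 2) (LinearMap.ker L) := by
    have h1 := LinearMap.finrank_range_add_finrank_ker L
    have h2 : Module.finrank (ZMod 2) (Fin m → ZMod 2) = m := by
      rw [Module.finrank_pi]; exact Fintype.card_fin m
    have h3 : Module.finrank (ZMod 2) (LinearMap.range L) ≤ n * (n + 1) / 2 := by
      have h4 := Submodule.finrank_le (LinearMap.range L)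
      have h5 : Module.finrank (ZMod 2) (Sym2 (Fin n) → ZMod 2) = n * (n + 1) / 2 := by
        rw [Module.finrank_pi, Sym2.card, Fintype.card_fin, Nat.choose_two_right,
          Nat.add_sub_cancel, Nat.mul_comm]
      omega
    rw [h2] at h1
    have hmm : n * (n + 1) / 2 + 1 < m := hm
    omega
  by_contra hcon
  push_neg at hcon
  have hle : LinearMap.ker L ≤ Submodule.span (ZMod 2) {(fun _ => 1 : Fin m → ZMod 2)} := by
    intro y hy
    rcases eq_or_ne y 0 with rfl | hy0
    · exact Submodule.zero_mem _
    · rw [hcon y ((hker_iff y).mp hy) hy0]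
      exact Submodule.mem_span_singleton_self _
  have hone : (fun _ => 1 : Fin m → ZMod 2) ≠ 0 := by
    intro h
    have := congrFun h ⟨0, by omega⟩
    exact one_ne_zero this
  have hmono := Submodule.finrank_mono hle
  rw [finrank_span_singleton hone] at hmono
  omega

/-- The key sum identity: the reduced matrix has the same triple parities. -/
lemma key_identity {n m : ℕ} (q : Fin n → Fin m → ZMod 2) (y : Fin m → ZMod 2)
    (hker : ∀ α β : Fin n, ∑ k, y k * (q α k * q β k) = 0)
    (i0 j0 : Fin m) (hi : y i0 = 1) (hj : y j0 = 0) (α β γ : Fin n) :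
    (((∑ k, y k) * (q α i0 + q α j0)) *
        ((((∑ k, y k) * (q β i0 + q β j0))) * ((∑ k, y k) * (q γ i0 + q γ j0)))) +
      (∑ t : {k : Fin m // k ≠ i0 ∧ k ≠ j0},
        (q α t + (q α i0 + q α j0) * y t) *
          ((q β t + (q β i0 + q β j0) * y t) * (q γ t + (q γ i0 + q γ j0) * y t)))
    = ∑ k, q α k * (q β k * q γ k) := by
  classical
  have hij : i0 ≠ j0 := by
    intro h; rw [h, hj] at hi; exact one_ne_zero hi.symm
  set z : Fin n → ZMod 2 := fun δ => q δ i0 + q δ j0 with hz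
  set f : Fin m → ZMod 2 := fun k =>
    (q α k + z α * y k) * ((q β k + z β * y k) * (q γ k + z γ * y k)) with hf
  -- sum over subtype equals sum over the complement of {i0, j0}
  have h1 : (∑ t : {k : Fin m // k ≠ i0 ∧ k ≠ j0}, f ↑t) =
      ∑ k ∈ Finset.univ.filter (fun k => k ≠ i0 ∧ k ≠ j0), f k :=
    (Finset.sum_subtype _ (by simp) f).symm
  have h2 : Finset.univ.filter (fun k => k ≠ i0 ∧ k ≠ j0) =
      (Finset.univ : Finset (Fin m)) \ {i0, j0} := by
    ext k; simp [not_or]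
  -- the two removed columns are equal, so they cancel in characteristic 2
  have hfi : f i0 = f j0 := by
    have e1 : ∀ δ : Fin n, q δ i0 + z δ * y i0 = q δ j0 := by
      intro δ; rw [hi, mul_one, hz]; exact zmod2_cancel _ _
    have e2 : ∀ δ : Fin n, q δ j0 + z δ * y j0 = q δ j0 := by
      intro δ; rw [hj, mul_zero, add_zero]
    rw [hf]; simp only [e1, e2]
  have h3 : (∑ k ∈ (Finset.univ : Finset (Fin m)) \ {i0, j0}, f k) = ∑ k, f k := by
    have hs := Finset.sum_sdiff (Finset.subset_univ ({i0, j0} : Finset (Fin m))) (f := f)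
    rw [Finset.sum_pair hij, hfi] at hs
    have : f j0 + f j0 = 0 := by
      have : ∀ a : ZMod 2, a + a = 0 := by decide
      exact this _
    rw [this, add_zero] at hs
    exact hs
  -- expand the full sum
  have h4 : (∑ k, f k) = (∑ k, q α k * (q β k * q γ k)) + z α * (z β * (z γ * ∑ k, y k)) := by
    have hpt : ∀ k : Fin m, f k =
        q α k * (q β k * q γ k) +
          (z γ * (y k * (q α k * q β k)) + (z β * (y k * (q α k * q γ k)) +
            (z α * (y k * (q β k * q γ k)) +
              (z β * (z γ * (y k * (q α k * q α k))) +
                (z α * (z γ * (y k * (q β k * q β k))) +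
                  (z α * (z β * (y k * (q γ k * q γ k))) +
                    z α * (z β * (z γ * y k)))))))) := fun k =>
      zmod2_expand (q α k) (q β k) (q γ k) (z α) (z β) (z γ) (y k)
    calc (∑ k, f k) = ∑ k, (q α k * (q β k * q γ k) +
          (z γ * (y k * (q α k * q β k)) + (z β * (y k * (q α k * q γ k)) +
            (z α * (y k * (q β k * q γ k)) +
              (z β * (z γ * (y k * (q α k * q α k))) +
                (z α * (z γ * (y k * (q β k * q β k))) +
                  (z α * (z β * (y k * (q γ k * q γ k))) +
                    z α * (z β * (z γ * y k))))))))) :=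
        Finset.sum_congr rfl fun k _ => hpt k
      _ = (∑ k, q α k * (q β k * q γ k)) + z α * (z β * (z γ * ∑ k, y k)) := by
        simp only [Finset.sum_add_distrib, ← Finset.mul_sum]
        rw [hker α β, hker α γ, hker β γ, hker α α, hker β β, hker γ γ]
        ring
  rw [h1, h2, h3, h4]
  exact zmod2_final _ _ _ _ _

theorem stmt_10 (n m : ℕ) (hm : m > n * (n + 1) / 2 + 1)
    (P : Fin n → Fin m → Bool) :
    ∃ m' : ℕ, m' < m ∧ ∃ P' : Fin n → Fin m' → Bool,
      ∀ α β γ : Fin n, α ≤ β → β ≤ γ →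
        wt (fun i => P' α i && P' β i && P' γ i) % 2 =
        wt (fun i => P α i && P β i && P γ i) % 2 := by
  classical
  have hm2 : 2 ≤ m := le_trans (Nat.le_add_left 2 _) hm
  set q : Fin n → Fin m → ZMod 2 := fun δ k => if P δ k then 1 else 0 with hq
  obtain ⟨y, hker, hy0, hy1⟩ := exists_good_y n m hm q
  obtain ⟨i0, hi0⟩ := Function.ne_iff.mp hy0
  obtain ⟨j0, hj0⟩ := Function.ne_iff.mp hy1
  have hi : y i0 = 1 := zmod2_ne_zero _ hi0
  have hj : y j0 = 0 := zmod2_ne_one _ hj0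
  have hij : i0 ≠ j0 := by
    intro h; rw [h, hj] at hi; exact one_ne_zero hi.symm
  -- the new index type
  have hcardsub : Fintype.card {k : Fin m // k ≠ i0 ∧ k ≠ j0} = m - 2 := by
    rw [Fintype.card_subtype]
    have h2 : Finset.univ.filter (fun k => k ≠ i0 ∧ k ≠ j0) =
        (Finset.univ : Finset (Fin m)) \ {i0, j0} := by
      ext k; simp [not_or]
    rw [h2, Finset.card_sdiff_of_subset (Finset.subset_univ _), Finset.card_univ, Fintype.card_fin,
      Finset.card_pair hij]
  have hcardT : Fintype.card (Option {k : Fin m // k ≠ i0 ∧ k ≠ j0}) = m - 1 := by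
    rw [Fintype.card_option, hcardsub]
    omega
  refine ⟨m - 1, by omega, ?_⟩
  set z : Fin n → ZMod 2 := fun δ => q δ i0 + q δ j0 with hz
  set s : ZMod 2 := ∑ k, y k with hs
  set q' : Fin n → Option {k : Fin m // k ≠ i0 ∧ k ≠ j0} → ZMod 2 := fun δ t =>
    match t with
    | none => s * z δ
    | some k => q δ k + z δ * y k
    with hq'
  have e : Fin (m - 1) ≃ Option {k : Fin m // k ≠ i0 ∧ k ≠ j0} :=
    (Fintype.equivFinOfCardEq hcardT).symm
  refine ⟨fun δ j => decide (q' δ (e j) = 1), ?_⟩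
  intro α β γ _ _
  rw [← ZMod.natCast_eq_natCast_iff']
  -- convert weights to sums in ZMod 2
  have cast_wt : ∀ {M : ℕ} (v : Fin M → Bool),
      ((wt v : ℕ) : ZMod 2) = ∑ i, (if v i = true then (1 : ZMod 2) else 0) := by
    intro M v
    unfold wt
    rw [Finset.card_filter]
    push_cast
    rfl
  rw [cast_wt, cast_wt]
  have hrw : ∀ (v₁ v₂ v₃ : Bool), (if ((v₁ && v₂) && v₃) = true then (1 : ZMod 2) else 0) =
      (if v₁ = true then (1 : ZMod 2) else 0) *
        ((if v₂ = true then (1 : ZMod 2) else 0) * (if v₃ = true then (1 : ZMod 2) else 0)) :=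
    zmod2_bool
  simp only [hrw]
  -- decode booleans back to ZMod 2 values
  have hdec : ∀ (δ : Fin n) (j : Fin (m - 1)),
      (if (decide (q' δ (e j) = 1)) = true then (1 : ZMod 2) else 0) = q' δ (e j) := by
    intro δ j
    by_cases h : q' δ (e j) = 1
    · simp [h]
    · simp [h, zmod2_ne_one _ h]
  simp only [hdec]
  -- transport the sum along the equivalence and split the option
  have hsum1 : (∑ j : Fin (m - 1), q' α (e j) * (q' β (e j) * q' γ (e j))) =
      ∑ t : Option {k : Fin m // k ≠ i0 ∧ k ≠ j0}, q' α t * (q' β t * q' γ t) :=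
    Fintype.sum_equiv e _ _ (fun j => rfl)
  rw [hsum1, Fintype.sum_option]
  exact key_identity q y hker i0 j0 hi hj α β γ
end

section
/- For every n × m matrix P over 𝔽₂ there exists an n × m' matrix P' over 𝔽₂ with m' ≤ n(n+1)/2 + 1 such that |P'_α ∧ P'_β ∧ P'_γ| ≡ |P_α ∧ P_β ∧ P_γ| (mod 2) for all α ≤ β ≤ γ. -/
namespace TCnt

variable {n : ℕ}

def bz (b : Bool) : ZMod 2 := if b then 1 else 0

def toB (z : ZMod 2) : Bool := decide (z = 1)

lemma bz_toB (z : ZMod 2) : bz (toB z) = z := by revert z; decide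

lemma toB_zero : toB (0 : ZMod 2) = false := by decide

lemma zmod2_cases (z : ZMod 2) : z = 0 ∨ z = 1 := by revert z; decide

lemma zmod2_ne_zero {z : ZMod 2} (h : z ≠ 0) : z = 1 := by revert z; decide

lemma zmod2_ne_one {z : ZMod 2} (h : z ≠ 1) : z = 0 := by revert z; decide

lemma zmod2_add_eq_zero {a b : ZMod 2} (h : a + b = 0) : a = b := by revert a b; decide

lemma zmod2_ne_add_one {a b : ZMod 2} (h : a ≠ b) : a + 1 = b := by revert a b; decide

def T3 (L : List (Fin n → Bool)) (α β γ : Fin n) : ZMod 2 :=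
  (L.map fun v => bz (v α) * bz (v β) * bz (v γ)).sum

lemma T3_nil (α β γ : Fin n) : T3 ([] : List (Fin n → Bool)) α β γ = 0 := rfl

lemma T3_cons (v : Fin n → Bool) (L : List (Fin n → Bool)) (α β γ : Fin n) :
    T3 (v :: L) α β γ = bz (v α) * bz (v β) * bz (v γ) + T3 L α β γ := by
  simp [T3]

lemma T3_append (L₁ L₂ : List (Fin n → Bool)) (α β γ : Fin n) :
    T3 (L₁ ++ L₂) α β γ = T3 L₁ α β γ + T3 L₂ α β γ := by
  simp [T3]

lemma T3_comm12 (L : List (Fin n → Bool)) (α β γ : Fin n) :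
    T3 L α β γ = T3 L β α γ := by
  unfold T3; congr 1; apply List.map_congr_left; intro v _; ring

lemma T3_comm23 (L : List (Fin n → Bool)) (α β γ : Fin n) :
    T3 L α β γ = T3 L α γ β := by
  unfold T3; congr 1; apply List.map_congr_left; intro v _; ring

lemma T3_comm13 (L : List (Fin n → Bool)) (α β γ : Fin n) :
    T3 L α β γ = T3 L γ β α := by
  unfold T3; congr 1; apply List.map_congr_left; intro v _; ring

lemma T3_idem (L : List (Fin n → Bool)) (a b : Fin n) :
    T3 L a a b = T3 L a b b := by
  unfold T3; congr 1; apply List.map_congr_left; intro v _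
  cases v a <;> cases v b <;> simp [bz]

def SuppIn (v : Fin n → Bool) (V : Finset (Fin n)) : Prop := ∀ x, x ∉ V → v x = false

lemma SuppIn.mono {v : Fin n → Bool} {W V : Finset (Fin n)} (h : W ⊆ V) (hv : SuppIn v W) :
    SuppIn v V := fun x hx => hv x (fun hxW => hx (h hxW))

lemma T3_supp1 {L : List (Fin n → Bool)} {V : Finset (Fin n)} (hL : ∀ v ∈ L, SuppIn v V)
    {α : Fin n} (hα : α ∉ V) (β γ : Fin n) : T3 L α β γ = 0 := by
  induction L with
  | nil => rfl
  | cons v L ih =>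
    rw [T3_cons, hL v (List.mem_cons_self) α hα]
    rw [ih (fun w hw => hL w (List.mem_cons_of_mem v hw))]
    simp [bz]

def Gram (A : List (Fin n → Bool)) (x y : Fin n) : ZMod 2 :=
  (A.map fun a => bz (a x) * bz (a y)).sum

lemma Gram_nil (x y : Fin n) : Gram ([] : List (Fin n → Bool)) x y = 0 := rfl

lemma Gram_cons (a : Fin n → Bool) (A : List (Fin n → Bool)) (x y : Fin n) :
    Gram (a :: A) x y = bz (a x) * bz (a y) + Gram A x y := by simp [Gram]

lemma Gram_append (A B : List (Fin n → Bool)) (x y : Fin n) :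
    Gram (A ++ B) x y = Gram A x y + Gram B x y := by simp [Gram]

def PGram (Ps : List ((Fin n → Bool) × (Fin n → Bool))) (x y : Fin n) : ZMod 2 :=
  (Ps.map fun p => bz (p.1 x) * bz (p.2 y) + bz (p.2 x) * bz (p.1 y)).sum

lemma PGram_nil (x y : Fin n) : PGram ([] : List ((Fin n → Bool) × (Fin n → Bool))) x y = 0 := rfl

lemma PGram_cons (p : (Fin n → Bool) × (Fin n → Bool)) (Ps : List _) (x y : Fin n) :
    PGram (p :: Ps) x y = (bz (p.1 x) * bz (p.2 y) + bz (p.2 x) * bz (p.1 y)) + PGram Ps x y := by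
  simp [PGram]

lemma PGram_diag (Ps : List ((Fin n → Bool) × (Fin n → Bool))) (x : Fin n) :
    PGram Ps x x = 0 := by
  induction Ps with
  | nil => rfl
  | cons p Ps ih =>
    rw [PGram_cons, ih, add_zero]
    have : ∀ a b : ZMod 2, a * b + b * a = 0 := by decide
    exact this _ _

def S (k : ℕ) : ℕ := k * (k + 1) / 2

lemma S_succ (k : ℕ) : S (k + 1) = (k + 1) + S k := by
  unfold S
  rw [show (k+1) * (k+1+1) = k * (k+1) + (k+1) * 2 by ring]
  rw [Nat.add_mul_div_right _ _ (by norm_num : 0 < 2)]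
  omega

lemma S_pos {k : ℕ} (hk : 1 ≤ k) : 1 ≤ S k := by
  obtain ⟨j, rfl⟩ := Nat.exists_eq_add_of_le hk
  rw [show 1 + j = j + 1 by omega, S_succ]
  omega

/-- The chain lemma: e eᵀ plus a sum of hyperbolic pairs is a sum of 2s+1 rank ones. -/
lemma chain {V : Finset (Fin n)} :
    ∀ (Ps : List ((Fin n → Bool) × (Fin n → Bool))),
      (∀ p ∈ Ps, SuppIn p.1 V ∧ SuppIn p.2 V) → ∀ e : Fin n → Bool, SuppIn e V →
      ∃ A : List (Fin n → Bool), (∀ a ∈ A, SuppIn a V) ∧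
        (∀ x y, Gram A x y = bz (e x) * bz (e y) + PGram Ps x y) ∧
        A.length = 2 * Ps.length + 1 := by
  intro Ps
  induction Ps with
  | nil =>
    intro _ e he
    refine ⟨[e], ?_, ?_, by simp⟩
    · intro a ha; rw [List.mem_singleton] at ha; subst ha; exact he
    · intro x y; rw [PGram_nil, Gram_cons, Gram_nil]
  | cons p tl ih =>
    intro hsupp e he
    set u := p.1 with hu
    set v := p.2 with hv
    have hup : SuppIn u V := (hsupp p List.mem_cons_self).1
    have hvp : SuppIn v V := (hsupp p List.mem_cons_self).2
    set e1 : Fin n → Bool := fun x => xor (e x) (u x) with he1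
    set e2 : Fin n → Bool := fun x => xor (e x) (v x) with he2
    set e3 : Fin n → Bool := fun x => xor (xor (e x) (u x)) (v x) with he3
    have he3s : SuppIn e3 V := by
      intro x hx; simp [he3, he x hx, hup x hx, hvp x hx]
    obtain ⟨A', hA's, hA'g, hA'l⟩ := ih (fun q hq => hsupp q (List.mem_cons_of_mem _ hq)) e3 he3s
    refine ⟨e1 :: e2 :: A', ?_, ?_, by simp only [List.length_cons, hA'l]; omega⟩
    · intro a ha
      rcases ha with _ | ⟨_, ha⟩
      · intro x hx; simp [he1, he x hx, hup x hx]
      · rcases ha with _ | ⟨_, ha⟩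
        · intro x hx; simp [he2, he x hx, hvp x hx]
        · exact hA's _ ha
    · intro x y
      rw [Gram_cons, Gram_cons, hA'g, PGram_cons]
      have hx1 : bz (e1 x) = bz (e x) + bz (u x) := by
        simp only [he1]; cases e x <;> cases u x <;> decide
      have hy1 : bz (e1 y) = bz (e y) + bz (u y) := by
        simp only [he1]; cases e y <;> cases u y <;> decide
      have hx2 : bz (e2 x) = bz (e x) + bz (v x) := by
        simp only [he2]; cases e x <;> cases v x <;> decide
      have hy2 : bz (e2 y) = bz (e y) + bz (v y) := by
        simp only [he2]; cases e y <;> cases v y <;> decide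
      have hx3 : bz (e3 x) = bz (e x) + bz (u x) + bz (v x) := by
        simp only [he3]; cases e x <;> cases u x <;> cases v x <;> decide
      have hy3 : bz (e3 y) = bz (e y) + bz (u y) + bz (v y) := by
        simp only [he3]; cases e y <;> cases u y <;> cases v y <;> decide
      rw [hx1, hy1, hx2, hy2, hx3, hy3]
      have key : ∀ a a' b b' c c' R : ZMod 2,
          (a + b) * (a' + b') + ((a + c) * (a' + c') + ((a + b + c) * (a' + b' + c') + R)) =
          a * a' + (b * c' + c * b' + R) := by decide
      exact key _ _ _ _ _ _ _

/-- Symmetric Gaussian elimination over F2. -/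
lemma Hdecomp : ∀ (k : ℕ) (V : Finset (Fin n)) (M : Fin n → Fin n → ZMod 2), V.card ≤ k →
    (∀ x y, M x y = M y x) → (∀ x y, x ∉ V → M x y = 0) →
    ∃ (Bs : List (Fin n → Bool)) (Ps : List ((Fin n → Bool) × (Fin n → Bool))),
      (∀ b ∈ Bs, SuppIn b V) ∧ (∀ p ∈ Ps, SuppIn p.1 V ∧ SuppIn p.2 V) ∧
      (∀ x y, M x y = Gram Bs x y + PGram Ps x y) ∧
      Bs.length + 2 * Ps.length ≤ V.card := by
  have hnotmem : ∀ (x a : Fin n) (s : Finset (Fin n)), x ∉ s.erase a → x = a ∨ x ∉ s := by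
    intro x a s h
    by_cases hxa : x = a
    · exact Or.inl hxa
    · exact Or.inr (fun hxs => h (Finset.mem_erase.mpr ⟨hxa, hxs⟩))
  intro k
  induction k with
  | zero =>
    intro V M hcard hsym hsupp
    refine ⟨[], [], by simp, by simp, ?_, by simp⟩
    intro x y
    have hV : V = ∅ := Finset.card_eq_zero.mp (Nat.le_zero.mp hcard)
    rw [hsupp x y (by simp [hV]), Gram_nil, PGram_nil, add_zero]
  | succ k IH =>
    intro V M hcard hsym hsupp
    by_cases hM0 : ∀ x y, M x y = 0
    · refine ⟨[], [], by simp, by simp, ?_, by simp⟩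
      intro x y; rw [hM0 x y, Gram_nil, PGram_nil, add_zero]
    push_neg at hM0
    obtain ⟨x₀, y₀, hxy0⟩ := hM0
    have hx₀V : x₀ ∈ V := by
      by_contra h; exact hxy0 (hsupp x₀ y₀ h)
    have hy₀V : y₀ ∈ V := by
      by_contra h; exact hxy0 (by rw [hsym]; exact hsupp y₀ x₀ h)
    have hVpos : 0 < V.card := Finset.card_pos.mpr ⟨x₀, hx₀V⟩
    by_cases hdiag : ∃ i, M i i ≠ 0
    · -- diagonal pivot
      obtain ⟨i, hi⟩ := hdiag
      have hii : M i i = 1 := zmod2_ne_zero hi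
      have hiV : i ∈ V := by
        by_contra h; exact hi (hsupp i i h)
      set M₁ : Fin n → Fin n → ZMod 2 := fun x y => M x y + M x i * M y i with hM₁
      have hM₁sym : ∀ x y, M₁ x y = M₁ y x := by
        intro x y; simp only [hM₁]; rw [hsym x y]; ring
      have hM₁supp : ∀ x y, x ∉ V.erase i → M₁ x y = 0 := by
        intro x y hx
        rcases hnotmem x i V hx with h | h
        · simp only [hM₁]; rw [h, hii, hsym i y]
          have : ∀ a : ZMod 2, a + 1 * a = 0 := by decide
          exact this _
        · simp only [hM₁]; rw [hsupp x y h, hsupp x i h]; ring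
      have hcard' : (V.erase i).card ≤ k := by
        rw [Finset.card_erase_of_mem hiV]; omega
      obtain ⟨Bs', Ps', hBs', hPs', heq', hlen'⟩ := IH (V.erase i) M₁ hcard' hM₁sym hM₁supp
      set b : Fin n → Bool := fun x => toB (M x i) with hb
      have hbS : SuppIn b V := by
        intro x hx; simp only [hb, hsupp x i hx, toB_zero]
      refine ⟨b :: Bs', Ps', ?_, ?_, ?_, ?_⟩
      · intro a ha
        rcases ha with _ | ⟨_, ha⟩
        · exact hbS
        · exact (hBs' _ ha).mono (Finset.erase_subset i V)
      · intro p hp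
        exact ⟨(hPs' p hp).1.mono (Finset.erase_subset i V),
               (hPs' p hp).2.mono (Finset.erase_subset i V)⟩
      · intro x y
        rw [Gram_cons]
        simp only [hb, bz_toB]
        have h1 := heq' x y
        simp only [hM₁] at h1
        rw [add_assoc, ← h1]
        have : ∀ a b : ZMod 2, b = a + (b + a) := by decide
        exact this _ _
      · rw [List.length_cons]
        rw [Finset.card_erase_of_mem hiV] at hlen'
        omega
    · -- alternating case
      push_neg at hdiag
      have hne : x₀ ≠ y₀ := by
        intro h; subst h; exact hxy0 (hdiag x₀)
      have hxy1 : M x₀ y₀ = 1 := zmod2_ne_zero hxy0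
      have hyx1 : M y₀ x₀ = 1 := by rw [hsym y₀ x₀]; exact hxy1
      set W : Finset (Fin n) := (V.erase x₀).erase y₀ with hW
      set M₁ : Fin n → Fin n → ZMod 2 :=
        fun x y => M x y + (M x y₀ * M y x₀ + M x x₀ * M y y₀) with hM₁
      have hM₁sym : ∀ x y, M₁ x y = M₁ y x := by
        intro x y; simp only [hM₁]
        rw [hsym x y, hsym x y₀, hsym y x₀, hsym x x₀, hsym y y₀]; ring
      have hM₁supp : ∀ x y, x ∉ W → M₁ x y = 0 := by
        intro x y hx
        rcases hnotmem x y₀ _ hx with h | h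
        · simp only [hM₁]
          rw [h, hdiag y₀, hyx1, hsym y₀ y]
          have : ∀ a c : ZMod 2, a + (0 * c + 1 * a) = 0 := by decide
          exact this _ _
        · rcases hnotmem x x₀ _ h with h' | h'
          · simp only [hM₁]
            rw [h', hdiag x₀, hxy1, hsym x₀ y]
            have : ∀ a c : ZMod 2, a + (1 * a + 0 * c) = 0 := by decide
            exact this _ _
          · simp only [hM₁]
            rw [hsupp x y h', hsupp x y₀ h', hsupp x x₀ h']; ring
      have hy₀W : y₀ ∈ V.erase x₀ := Finset.mem_erase.mpr ⟨hne.symm, hy₀V⟩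
      have hcardW : W.card = V.card - 2 := by
        simp only [hW]
        rw [Finset.card_erase_of_mem hy₀W, Finset.card_erase_of_mem hx₀V]
        omega
      have hV2 : 2 ≤ V.card := by
        have := Finset.one_lt_card.mpr ⟨x₀, hx₀V, y₀, hy₀V, hne⟩
        omega
      have hcard' : W.card ≤ k := by omega
      obtain ⟨Bs', Ps', hBs', hPs', heq', hlen'⟩ := IH W M₁ hcard' hM₁sym hM₁supp
      set u : Fin n → Bool := fun x => toB (M x y₀) with hu
      set v : Fin n → Bool := fun x => toB (M x x₀) with hv
      have hWV : W ⊆ V := by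
        intro x hx
        exact Finset.mem_of_mem_erase (Finset.mem_of_mem_erase hx)
      refine ⟨Bs', (u, v) :: Ps', ?_, ?_, ?_, ?_⟩
      · intro a ha; exact (hBs' _ ha).mono hWV
      · intro p hp
        rcases hp with _ | ⟨_, hp⟩
        · constructor
          · intro x hx; simp only [hu, hsupp x y₀ hx, toB_zero]
          · intro x hx; simp only [hv, hsupp x x₀ hx, toB_zero]
        · exact ⟨(hPs' p hp).1.mono hWV, (hPs' p hp).2.mono hWV⟩
      · intro x y
        rw [PGram_cons]
        simp only [hu, hv, bz_toB]
        have h1 := heq' x y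
        simp only [hM₁] at h1
        rw [← add_assoc, add_comm (Gram Bs' x y), add_assoc, ← h1]
        have : ∀ a b : ZMod 2, b = a + (b + a) := by decide
        exact this _ _
      · rw [List.length_cons]
        omega

/-- Rank-one decomposition of symmetric F2 matrices with the crucial size bound. -/
lemma matlem (V : Finset (Fin n)) (M : Fin n → Fin n → ZMod 2)
    (hsym : ∀ x y, M x y = M y x) (hsupp : ∀ x y, x ∉ V → M x y = 0) :
    ∃ A : List (Fin n → Bool), (∀ a ∈ A, SuppIn a V) ∧
      (∀ x y, Gram A x y = M x y) ∧ A.length ≤ V.card + 1 ∧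
      (A.length = V.card + 1 → (Even V.card ∧ ∀ x, M x x = 0)) := by
  obtain ⟨Bs, Ps, hBs, hPs, heq, hlen⟩ := Hdecomp V.card V M le_rfl hsym hsupp
  cases Bs with
  | nil =>
    obtain ⟨A, hAs, hAg, hAl⟩ := chain Ps hPs (fun _ => false) (fun x _ => rfl)
    refine ⟨A, hAs, ?_, ?_, ?_⟩
    · intro x y
      rw [hAg, heq x y, Gram_nil]
      simp [bz]
    · simp only [List.length_nil, Nat.zero_add] at hlen
      omega
    · intro hA
      simp only [List.length_nil, Nat.zero_add] at hlen
      constructor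
      · refine ⟨Ps.length, ?_⟩; omega
      · intro x
        rw [heq x x, Gram_nil, PGram_diag, add_zero]
  | cons b Bs' =>
    obtain ⟨C, hCs, hCg, hCl⟩ := chain Ps hPs b
      (fun x hx => by
        have := hBs b List.mem_cons_self x hx
        exact this)
    refine ⟨Bs' ++ C, ?_, ?_, ?_, ?_⟩
    · intro a ha
      rcases List.mem_append.mp ha with h | h
      · exact hBs a (List.mem_cons_of_mem _ h)
      · exact hCs a h
    · intro x y
      rw [Gram_append, hCg, heq x y, Gram_cons]
      ring
    · rw [List.length_append, hCl]
      rw [List.length_cons] at hlen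
      omega
    · intro hA
      rw [List.length_append, hCl] at hA
      rw [List.length_cons] at hlen
      omega

def ins (i : Fin n) (a : Fin n → Bool) : Fin n → Bool := fun x => if x = i then true else a x

def zat (i : Fin n) (v : Fin n → Bool) : Fin n → Bool := fun x => if x = i then false else v x

lemma T3_map_ins_1 {A : List (Fin n → Bool)} {i x y : Fin n} (hx : x ≠ i) (hy : y ≠ i) :
    T3 (A.map (ins i)) i x y = Gram A x y := by
  unfold T3 Gram
  rw [List.map_map]
  congr 1
  apply List.map_congr_left
  intro a _
  simp [Function.comp, ins, hx, hy, bz]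

lemma T3_map_ins_2 {A : List (Fin n → Bool)} {i y : Fin n} (hy : y ≠ i) :
    T3 (A.map (ins i)) i i y = Gram A y y := by
  unfold T3 Gram
  rw [List.map_map]
  congr 1
  apply List.map_congr_left
  intro a _
  simp only [Function.comp, ins, if_pos rfl, if_neg hy]
  cases a y <;> simp [bz]

lemma sum_ones (A : List (Fin n → Bool)) :
    (A.map (fun _ => (1 : ZMod 2))).sum = (A.length : ZMod 2) := by
  induction A with
  | nil => simp
  | cons a A ih =>
    simp only [List.map_cons, List.sum_cons, ih, List.length_cons]
    push_cast
    ring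

lemma T3_map_ins_3 {A : List (Fin n → Bool)} {i : Fin n} :
    T3 (A.map (ins i)) i i i = (A.length : ZMod 2) := by
  unfold T3
  rw [List.map_map]
  have h2 : A.map ((fun v => bz (v i) * bz (v i) * bz (v i)) ∘ ins i) =
      A.map (fun _ => (1 : ZMod 2)) := by
    apply List.map_congr_left
    intro a _
    simp [Function.comp, ins, bz]
  rw [h2, sum_ones]

lemma T3_map_ins_4 {A : List (Fin n → Bool)} {i x y z : Fin n}
    (hx : x ≠ i) (hy : y ≠ i) (hz : z ≠ i) :
    T3 (A.map (ins i)) x y z = T3 A x y z := by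
  unfold T3
  rw [List.map_map]
  congr 1
  apply List.map_congr_left
  intro a _
  simp [Function.comp, ins, hx, hy, hz]

lemma T3_self_pair (A : List (Fin n → Bool)) (b x : Fin n) :
    T3 A b b x = Gram A b x := by
  unfold T3 Gram
  congr 1
  apply List.map_congr_left
  intro a _
  cases a b <;> cases a x <;> simp [bz]

lemma T3_map_zat_eq {X : List (Fin n → Bool)} {i x y z : Fin n}
    (hx : x ≠ i) (hy : y ≠ i) (hz : z ≠ i) :
    T3 (X.map (zat i)) x y z = T3 X x y z := by
  unfold T3
  rw [List.map_map]
  congr 1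
  apply List.map_congr_left
  intro a _
  simp [Function.comp, zat, hx, hy, hz]

lemma T3_map_zat_zero {X : List (Fin n → Bool)} {i y z : Fin n} :
    T3 (X.map (zat i)) i y z = 0 := by
  unfold T3
  rw [List.map_map]
  have h2 : X.map ((fun v => bz (v i) * bz (v y) * bz (v z)) ∘ zat i) =
      X.map (fun _ => (0 : ZMod 2)) := by
    apply List.map_congr_left
    intro a _
    simp [Function.comp, zat, bz]
  rw [h2]
  clear h2
  induction X with
  | nil => simp
  | cons a X ih => simp only [List.map_cons, List.sum_cons, ih, zero_add]

lemma pivotStep (V : Finset (Fin n)) (i : Fin n) (hi : i ∈ V) (L : List (Fin n → Bool))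
    (hL : ∀ v ∈ L, SuppIn v V)
    (IH : ∀ L₂ : List (Fin n → Bool), (∀ v ∈ L₂, SuppIn v (V.erase i)) →
      ∃ L₃ : List (Fin n → Bool), (∀ v ∈ L₃, SuppIn v (V.erase i)) ∧
        (∀ α β γ, T3 L₃ α β γ = T3 L₂ α β γ) ∧
        L₃.length ≤ S (V.erase i).card + 1 ∧
        ((Even (V.erase i).card ∨ ∃ a ∈ V.erase i, ∃ x ∈ V.erase i, T3 L₂ a a x = 1) →
          L₃.length ≤ S (V.erase i).card)) :
    ∃ L' : List (Fin n → Bool), (∀ v ∈ L', SuppIn v V) ∧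
      (∀ α β γ, T3 L' α β γ = T3 L α β γ) ∧
      ∃ a r : ℕ, L'.length = a + r ∧
        a ≤ V.card + 1 ∧
        ((Even V.card ∨ ∃ x ∈ V, T3 L i i x = 1) → a ≤ V.card) ∧
        r ≤ S (V.card - 1) + 1 ∧
        ((Even (V.card - 1) ∨ ∃ b ∈ V.erase i, ∃ x ∈ V.erase i, T3 L b b x + T3 L i b x = 1) →
          r ≤ S (V.card - 1)) := by
  have hk : (V.erase i).card = V.card - 1 := Finset.card_erase_of_mem hi
  have hK1 : 1 ≤ V.card := Finset.card_pos.mpr ⟨i, hi⟩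
  set M : Fin n → Fin n → ZMod 2 :=
    fun x y => if x = i ∨ y = i then 0 else T3 L i x y with hM
  have hMsym : ∀ x y, M x y = M y x := by
    intro x y
    simp only [hM]
    by_cases h : x = i ∨ y = i
    · rw [if_pos h, if_pos (Or.symm h)]
    · rw [if_neg h, if_neg (fun hc => h (Or.symm hc)), T3_comm23]
  have hMsupp : ∀ x y, x ∉ V.erase i → M x y = 0 := by
    intro x y hx
    by_cases hxi : x = i
    · simp only [hM]; rw [if_pos (Or.inl hxi)]
    · have hxV : x ∉ V := fun hxV => hx (Finset.mem_erase.mpr ⟨hxi, hxV⟩)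
      simp only [hM]
      by_cases hyi : y = i
      · rw [if_pos (Or.inr hyi)]
      · rw [if_neg (by tauto)]
        rw [T3_comm12]
        exact T3_supp1 hL hxV i y
  obtain ⟨A₀, hA₀s, hA₀g, hA₀l, hA₀cl⟩ := matlem (V.erase i) M hMsym hMsupp
  rw [hk] at hA₀l hA₀cl
  obtain ⟨A, hAs, hAG, hApar, hAlen, hAgood⟩ :
      ∃ A : List (Fin n → Bool), (∀ a ∈ A, SuppIn a (V.erase i)) ∧
        (∀ x y, Gram A x y = M x y) ∧ ((A.length : ZMod 2) = T3 L i i i) ∧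
        A.length ≤ V.card + 1 ∧
        ((Even V.card ∨ ∃ x ∈ V, T3 L i i x = 1) → A.length ≤ V.card) := by
    by_cases hpar : (A₀.length : ZMod 2) = T3 L i i i
    · exact ⟨A₀, hA₀s, hA₀g, hpar, by omega, fun _ => by omega⟩
    · refine ⟨(fun _ => false) :: A₀, ?_, ?_, ?_, ?_, ?_⟩
      · intro a ha
        rcases ha with _ | ⟨_, ha⟩
        · intro x _; rfl
        · exact hA₀s _ ha
      · intro x y; rw [Gram_cons, hA₀g]; simp [bz]
      · rw [List.length_cons]
        push_cast
        exact zmod2_ne_add_one hpar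
      · rw [List.length_cons]; omega
      · rw [List.length_cons]
        intro h
        by_cases h0 : A₀.length ≤ V.card - 1
        · omega
        · have hA₀e : A₀.length = V.card - 1 + 1 := by omega
          obtain ⟨hEv, hdg⟩ := hA₀cl hA₀e
          exfalso
          rcases h with h | ⟨x, hxV, hTx⟩
          · rw [Nat.even_iff] at hEv h
            omega
          · by_cases hxi : x = i
            · rw [hxi] at hTx
              apply hpar
              rw [hA₀e]
              push_cast
              have hcast : ((V.card - 1 : ℕ) : ZMod 2) = 0 := by
                have := (CharP.cast_eq_zero_iff (ZMod 2) 2 (V.card - 1)).mpr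
                  (even_iff_two_dvd.mp hEv)
                exact this
              rw [hcast, zero_add, hTx]
            · have hMxx : M x x = 0 := hdg x
              have : M x x = T3 L i x x := by
                simp only [hM]; rw [if_neg (by tauto)]
              rw [this, ← T3_idem, hTx] at hMxx
              exact one_ne_zero hMxx
  set A' : List (Fin n → Bool) := A.map (ins i) with hA'
  have hA'supp : ∀ v ∈ A', SuppIn v V := by
    intro v hv
    rw [hA', List.mem_map] at hv
    obtain ⟨a, ha, rfl⟩ := hv
    intro x hx
    have hxi : x ≠ i := fun hc => hx (hc ▸ hi)
    simp only [ins, if_neg hxi]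
    exact hAs a ha x (fun hc => hx (Finset.mem_of_mem_erase hc))
  have hE : ∀ x y, T3 A' i x y = T3 L i x y := by
    intro x y
    by_cases hx : x = i
    · rw [hx]
      by_cases hy : y = i
      · rw [hy, hA', T3_map_ins_3, hApar]
      · rw [hA', T3_map_ins_2 hy, hAG]
        have : M y y = T3 L i y y := by simp only [hM]; rw [if_neg (by tauto)]
        rw [this, ← T3_idem]
    · by_cases hy : y = i
      · rw [hy]
        rw [T3_comm23 A' i x i, T3_comm23 L i x i]
        rw [hA', T3_map_ins_2 hx, hAG]
        have : M x x = T3 L i x x := by simp only [hM]; rw [if_neg (by tauto)]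
        rw [this, ← T3_idem]
      · rw [hA', T3_map_ins_1 hx hy, hAG]
        simp only [hM]; rw [if_neg (by tauto)]
  have hEE : ∀ α β γ, (α = i ∨ β = i ∨ γ = i) → T3 A' α β γ = T3 L α β γ := by
    intro α β γ h
    rcases h with h | h | h
    · rw [h]; exact hE β γ
    · rw [h, T3_comm12 A', T3_comm12 L]; exact hE α γ
    · rw [h, T3_comm13 A', T3_comm13 L]; exact hE β α
  set Lres : List (Fin n → Bool) := (L ++ A').map (zat i) with hLres
  have hLA'supp : ∀ v ∈ L ++ A', SuppIn v V := by
    intro v hv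
    rcases List.mem_append.mp hv with h | h
    · exact hL v h
    · exact hA'supp v h
  have hLresSupp : ∀ v ∈ Lres, SuppIn v (V.erase i) := by
    intro v hv
    rw [hLres, List.mem_map] at hv
    obtain ⟨w, hw, rfl⟩ := hv
    intro x hx
    by_cases hxi : x = i
    · simp only [zat, if_pos hxi]
    · simp only [zat, if_neg hxi]
      exact hLA'supp w hw x (fun hc => hx (Finset.mem_erase.mpr ⟨hxi, hc⟩))
  obtain ⟨Lrec, hrsupp, hreq, hrlen, hrgood⟩ := IH Lres hLresSupp
  refine ⟨A' ++ Lrec, ?_, ?_, A.length, Lrec.length, ?_, hAlen, hAgood, ?_, ?_⟩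
  · intro v hv
    rcases List.mem_append.mp hv with h | h
    · exact hA'supp v h
    · exact (hrsupp v h).mono (Finset.erase_subset i V)
  · intro α β γ
    rw [T3_append, hreq α β γ]
    by_cases hin : α = i ∨ β = i ∨ γ = i
    · have hz : T3 Lres α β γ = 0 := by
        rcases hin with h | h | h
        · rw [h, hLres]; exact T3_map_zat_zero
        · rw [h, T3_comm12, hLres]; exact T3_map_zat_zero
        · rw [h, T3_comm13, hLres]; exact T3_map_zat_zero
      rw [hz, add_zero]
      exact hEE α β γ hin
    · push_neg at hin
      obtain ⟨h1, h2, h3⟩ := hin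
      rw [hLres, T3_map_zat_eq h1 h2 h3, T3_append]
      have key : ∀ a b : ZMod 2, a + (b + a) = b := by decide
      exact key _ _
  · rw [List.length_append, hA', List.length_map]
  · rw [← hk]; exact hrlen
  · intro h
    rw [← hk]
    apply hrgood
    rcases h with h | ⟨b, hb, x, hx, hbx⟩
    · left; rw [hk]; exact h
    · right
      refine ⟨b, hb, x, hx, ?_⟩
      have hbi : b ≠ i := (Finset.mem_erase.mp hb).1
      have hxi : x ≠ i := (Finset.mem_erase.mp hx).1
      rw [hLres, T3_map_zat_eq hbi hbi hxi, T3_append]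
      have hA'bbx : T3 A' b b x = T3 L i b x := by
        rw [hA', T3_map_ins_4 hbi hbi hxi, T3_self_pair, hAG]
        simp only [hM]; rw [if_neg (by tauto)]
      rw [hA'bbx]
      exact hbx

lemma mainLemma : ∀ (k : ℕ) (V : Finset (Fin n)), V.card ≤ k → ∀ L : List (Fin n → Bool),
    (∀ v ∈ L, SuppIn v V) →
    ∃ L' : List (Fin n → Bool), (∀ v ∈ L', SuppIn v V) ∧
      (∀ α β γ, T3 L' α β γ = T3 L α β γ) ∧
      L'.length ≤ S V.card + 1 ∧
      ((Even V.card ∨ ∃ a ∈ V, ∃ x ∈ V, T3 L a a x = 1) → L'.length ≤ S V.card) := by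
  intro k
  induction k with
  | zero =>
    intro V hcard L hL
    have hV : V = ∅ := Finset.card_eq_zero.mp (Nat.le_zero.mp hcard)
    refine ⟨[], by simp, ?_, by simp, by simp⟩
    intro α β γ
    rw [T3_nil, T3_supp1 hL (by simp [hV]) β γ]
  | succ k IH =>
    intro V hcard L hL
    by_cases hV : V = ∅
    · refine ⟨[], by simp, ?_, by simp, by simp⟩
      intro α β γ
      rw [T3_nil, T3_supp1 hL (by simp [hV]) β γ]
    obtain ⟨i₀, hi₀⟩ := Finset.nonempty_iff_ne_empty.mpr hV
    have hK1 : 1 ≤ V.card := Finset.card_pos.mpr ⟨i₀, hi₀⟩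
    have hIH' : ∀ i, i ∈ V → ∀ L₂ : List (Fin n → Bool),
        (∀ v ∈ L₂, SuppIn v (V.erase i)) →
        ∃ L₃ : List (Fin n → Bool), (∀ v ∈ L₃, SuppIn v (V.erase i)) ∧
          (∀ α β γ, T3 L₃ α β γ = T3 L₂ α β γ) ∧
          L₃.length ≤ S (V.erase i).card + 1 ∧
          ((Even (V.erase i).card ∨ ∃ a ∈ V.erase i, ∃ x ∈ V.erase i, T3 L₂ a a x = 1) →
            L₃.length ≤ S (V.erase i).card) := by
      intro i hiV L₂ hL₂
      apply IH (V.erase i) _ L₂ hL₂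
      rw [Finset.card_erase_of_mem hiV]
      omega
    have hS : S V.card = V.card + S (V.card - 1) := by
      have h1 : V.card - 1 + 1 = V.card := by omega
      conv_lhs => rw [← h1]
      rw [S_succ, h1]
    by_cases hpar : Even V.card
    · -- even level
      by_cases hgp : ∃ i ∈ V, ∃ b ∈ V.erase i, ∃ x ∈ V.erase i, T3 L b b x + T3 L i b x = 1
      · obtain ⟨i, hi, hcond⟩ := hgp
        obtain ⟨L', hsupp, heqv, a, r, hlen, _, ha2, _, hr2⟩ :=
          pivotStep V i hi L hL (hIH' i hi)
        have hba : a ≤ V.card := ha2 (Or.inl hpar)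
        have hbr : r ≤ S (V.card - 1) := hr2 (Or.inr hcond)
        exact ⟨L', hsupp, heqv, by omega, fun _ => by omega⟩
      · -- uniform target
        push_neg at hgp
        have huni : ∀ i ∈ V, ∀ b ∈ V.erase i, ∀ x ∈ V.erase i, T3 L b b x = T3 L i b x := by
          intro i hi b hb x hx
          exact zmod2_add_eq_zero (zmod2_ne_one (hgp i hi b hb x hx))
        have step1 : ∀ α ∈ V, ∀ β ∈ V, α ≠ β → T3 L α β β = T3 L β β β := by
          intro α hα β hβ hne
          have := huni α hα β (Finset.mem_erase.mpr ⟨Ne.symm hne, hβ⟩)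
            β (Finset.mem_erase.mpr ⟨Ne.symm hne, hβ⟩)
          exact this.symm
        have diag : ∀ α ∈ V, T3 L α α α = T3 L i₀ i₀ i₀ := by
          intro α hα
          by_cases h : α = i₀
          · rw [h]
          · have h' : i₀ ≠ α := Ne.symm h
            calc T3 L α α α = T3 L i₀ α α := (step1 i₀ hi₀ α hα h').symm
              _ = T3 L i₀ i₀ α := (T3_idem L i₀ α).symm
              _ = T3 L α i₀ i₀ := by rw [T3_comm13]
              _ = T3 L i₀ i₀ i₀ := step1 α hα i₀ hi₀ h
        have pairs : ∀ α ∈ V, ∀ β ∈ V, T3 L α β β = T3 L i₀ i₀ i₀ := by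
          intro α hα β hβ
          by_cases h : α = β
          · rw [h]; exact diag β hβ
          · rw [step1 α hα β hβ h]; exact diag β hβ
        have hU : ∀ α ∈ V, ∀ β ∈ V, ∀ γ ∈ V, T3 L α β γ = T3 L i₀ i₀ i₀ := by
          intro α hα β hβ γ hγ
          by_cases hβγ : β = γ
          · rw [hβγ]; exact pairs α hα γ hγ
          by_cases hαβ : α = β
          · rw [hαβ, T3_idem]; exact pairs β hβ γ hγ
          by_cases hαγ : α = γ
          · rw [hαγ, T3_comm23, T3_idem]; exact pairs γ hγ β hβ
          · rw [← huni α hα β (Finset.mem_erase.mpr ⟨Ne.symm hαβ, hβ⟩)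
              γ (Finset.mem_erase.mpr ⟨Ne.symm hαγ, hγ⟩)]
            rw [T3_comm13]
            exact pairs γ hγ β hβ
        have houtside : ∀ α β γ : Fin n, (α ∉ V ∨ β ∉ V ∨ γ ∉ V) → T3 L α β γ = 0 := by
          intro α β γ h
          rcases h with h | h | h
          · exact T3_supp1 hL h β γ
          · rw [T3_comm12]; exact T3_supp1 hL h α γ
          · rw [T3_comm13]; exact T3_supp1 hL h β α
        by_cases hc : T3 L i₀ i₀ i₀ = 0
        · refine ⟨[], by simp, ?_, by simp, by simp⟩
          intro α β γ
          rw [T3_nil]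
          by_cases hin : α ∈ V ∧ β ∈ V ∧ γ ∈ V
          · rw [hU α hin.1 β hin.2.1 γ hin.2.2, hc]
          · rw [houtside α β γ (by tauto)]
        · have hc1 : T3 L i₀ i₀ i₀ = 1 := zmod2_ne_zero hc
          refine ⟨[fun x => decide (x ∈ V)], ?_, ?_, ?_, ?_⟩
          · intro v hv
            rw [List.mem_singleton] at hv
            subst hv
            intro x hx
            simp [hx]
          · intro α β γ
            rw [T3_cons, T3_nil, add_zero]
            by_cases hin : α ∈ V ∧ β ∈ V ∧ γ ∈ V
            · rw [hU α hin.1 β hin.2.1 γ hin.2.2, hc1]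
              simp [hin.1, hin.2.1, hin.2.2, bz]
            · rw [houtside α β γ (by tauto)]
              rcases not_and_or.mp hin with h | h
              · simp [h, bz]
              · rcases not_and_or.mp h with h' | h'
                · simp [h', bz]
                · simp [h', bz]
          · simp only [List.length_singleton]
            have := S_pos hK1
            omega
          · intro _
            simp only [List.length_singleton]
            exact S_pos hK1
    · -- odd level
      by_cases hgood : ∃ a ∈ V, ∃ x ∈ V, T3 L a a x = 1
      · obtain ⟨i, hi, x, hx, hT⟩ := hgood
        obtain ⟨L', hsupp, heqv, a, r, hlen, _, ha2, _, hr2⟩ :=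
          pivotStep V i hi L hL (hIH' i hi)
        have hba : a ≤ V.card := ha2 (Or.inr ⟨x, hx, hT⟩)
        have heven : Even (V.card - 1) := by
          rw [Nat.even_iff]; rw [Nat.even_iff] at hpar; omega
        have hbr : r ≤ S (V.card - 1) := hr2 (Or.inl heven)
        exact ⟨L', hsupp, heqv, by omega, fun _ => by omega⟩
      · obtain ⟨L', hsupp, heqv, a, r, hlen, ha1, _, _, hr2⟩ :=
          pivotStep V i₀ hi₀ L hL (hIH' i₀ hi₀)
        have heven : Even (V.card - 1) := by
          rw [Nat.even_iff]; rw [Nat.even_iff] at hpar; omega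
        have hbr : r ≤ S (V.card - 1) := hr2 (Or.inl heven)
        refine ⟨L', hsupp, heqv, by omega, ?_⟩
        intro h
        rcases h with h | h
        · exact absurd h hpar
        · exact absurd h hgood

lemma bz_and (a b : Bool) : bz (a && b) = bz a * bz b := by
  cases a <;> cases b <;> decide

lemma mod2_of_cast {a b : ℕ} (h : (a : ZMod 2) = b) : a % 2 = b % 2 :=
  (ZMod.natCast_eq_natCast_iff a b 2).mp h

lemma wt_cast {m : ℕ} (f : Fin m → Bool) : ((wt f : ℕ) : ZMod 2) = ∑ i, bz (f i) := by
  unfold wt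
  rw [Finset.card_filter]
  push_cast
  apply Finset.sum_congr rfl
  intro i _
  cases f i <;> simp [bz]

lemma T3_ofFn {m : ℕ} (g : Fin m → (Fin n → Bool)) (α β γ : Fin n) :
    T3 (List.ofFn g) α β γ = ∑ i, bz (g i α) * bz (g i β) * bz (g i γ) := by
  unfold T3
  rw [List.map_ofFn, List.sum_ofFn]
  rfl

end TCnt

theorem stmt_11 (n m : ℕ) (P : Fin n → Fin m → Bool) :
    ∃ m' : ℕ, m' ≤ n * (n + 1) / 2 + 1 ∧ ∃ P' : Fin n → Fin m' → Bool,
      ∀ α β γ : Fin n, α ≤ β → β ≤ γ →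
        wt (fun i => P' α i && P' β i && P' γ i) % 2 =
        wt (fun i => P α i && P β i && P γ i) % 2 := by
  classical
  set L₀ : List (Fin n → Bool) := List.ofFn (fun i : Fin m => fun α => P α i) with hL₀
  have hcardV : (Finset.univ : Finset (Fin n)).card = n := by
    rw [Finset.card_univ, Fintype.card_fin]
  obtain ⟨L', hsupp, heqv, hlen, _⟩ := TCnt.mainLemma n (Finset.univ : Finset (Fin n))
    (le_of_eq hcardV) L₀ (fun v _ x hx => absurd (Finset.mem_univ x) hx)
  refine ⟨L'.length, ?_, fun α i => L'.get i α, ?_⟩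
  · rw [hcardV] at hlen
    exact hlen
  · intro α β γ _ _
    apply TCnt.mod2_of_cast
    rw [TCnt.wt_cast, TCnt.wt_cast]
    have h1 : ∑ i, TCnt.bz (L'.get i α && L'.get i β && L'.get i γ) = TCnt.T3 L' α β γ := by
      conv_rhs => rw [← List.ofFn_get L']
      rw [TCnt.T3_ofFn]
      apply Finset.sum_congr rfl
      intro i _
      rw [TCnt.bz_and, TCnt.bz_and]
    have h2 : ∑ i : Fin m, TCnt.bz (P α i && P β i && P γ i) = TCnt.T3 L₀ α β γ := by
      rw [hL₀, TCnt.T3_ofFn]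
      apply Finset.sum_congr rfl
      intro i _
      rw [TCnt.bz_and, TCnt.bz_and]
    calc ∑ i, TCnt.bz ((fun α i => L'.get i α) α i && (fun α i => L'.get i α) β i &&
            (fun α i => L'.get i α) γ i)
        = TCnt.T3 L' α β γ := h1
      _ = TCnt.T3 L₀ α β γ := heqv α β γ
      _ = ∑ i : Fin m, TCnt.bz (P α i && P β i && P γ i) := h2.symm
end

section
/- Let n be even, and for vectors a, b ∈ 𝔽₂ⁿ and c, c' ∈ 𝔽₂ⁿ define g(a,b,c) = Σ_{i=0}^{n-1} Σ_{j=0}^{i} a_j b_{i-j} c_i (mod 2) and h(a,b,c') = Σ_{i=0}^{n-2} Σ_{j=i+1}^{n-1} a_j b_{n+i-j} c'_i (mod 2). Writing a_L, a_R for the left/right halves of a (similarly for b, c, c'), one has: g(a,b,c) ⊕ h(a,b,c') = g(a_L⊕a_R, b_L⊕b_R, c_R) ⊕ h(a_L⊕a_R, b_L⊕b_R, c'_L) ⊕ g(a_R, b_R, c'_L⊕c_R) ⊕ h(a_R, b_R, c'_L⊕c'_R) ⊕ g(a_L, b_L, c_L⊕c_R) ⊕ h(a_L, b_L, c'_L⊕c_R).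 -/
/-- `g(a,b,c) = ∑_{i=0}^{n-1} ∑_{j=0}^{i} a_j b_{i-j} c_i` over `𝔽₂`. -/
def g (n : ℕ) (a b c : ℕ → ZMod 2) : ZMod 2 :=
  ∑ i ∈ Finset.range n, ∑ j ∈ Finset.range (i + 1), a j * b (i - j) * c i

/-- `h(a,b,c') = ∑_{i=0}^{n-2} ∑_{j=i+1}^{n-1} a_j b_{n+i-j} c'_i` over `𝔽₂`. -/
def h (n : ℕ) (a b c' : ℕ → ZMod 2) : ZMod 2 :=
  ∑ i ∈ Finset.range (n - 1), ∑ j ∈ Finset.Icc (i + 1) (n - 1),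
    a j * b (n + i - j) * c' i

open Finset

lemma g_eq (n : ℕ) (a b c : ℕ → ZMod 2) :
    g n a b c = ∑ p ∈ (range n ×ˢ range n).filter (fun p => p.1 + p.2 < n),
      a p.1 * b p.2 * c (p.1 + p.2) := by
  rw [g, Finset.sum_sigma']
  apply Finset.sum_nbij' (fun p => (p.2, p.1 - p.2)) (fun p => ⟨p.1 + p.2, p.1⟩)
  · rintro ⟨i, j⟩ hp
    simp only [mem_sigma, mem_range] at hp
    simp only [mem_filter, mem_product, mem_range]
    omega
  · rintro ⟨j, l⟩ hp
    simp only [mem_filter, mem_product, mem_range] at hp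
    simp only [mem_sigma, mem_range]
    omega
  · rintro ⟨i, j⟩ hp
    simp only [mem_sigma, mem_range] at hp
    dsimp only
    rw [show j + (i - j) = i from by omega]
  · rintro ⟨j, l⟩ hp
    dsimp only
    rw [show j + l - j = l from by omega]
  · rintro ⟨i, j⟩ hp
    simp only [mem_sigma, mem_range] at hp
    dsimp only
    rw [show j + (i - j) = i from by omega]

lemma h_eq (n : ℕ) (a b c' : ℕ → ZMod 2) :
    h n a b c' = ∑ p ∈ (range n ×ˢ range n).filter (fun p => ¬ p.1 + p.2 < n),
      a p.1 * b p.2 * c' (p.1 + p.2 - n) := by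
  rw [h, Finset.sum_sigma']
  apply Finset.sum_nbij' (fun p => (p.2, n + p.1 - p.2)) (fun p => ⟨p.1 + p.2 - n, p.1⟩)
  · rintro ⟨i, j⟩ hp
    simp only [mem_sigma, mem_range, mem_Icc] at hp
    simp only [mem_filter, mem_product, mem_range]
    omega
  · rintro ⟨j, l⟩ hp
    simp only [mem_filter, mem_product, mem_range] at hp
    simp only [mem_sigma, mem_range, mem_Icc]
    omega
  · rintro ⟨i, j⟩ hp
    simp only [mem_sigma, mem_range, mem_Icc] at hp
    dsimp only
    rw [show j + (n + i - j) - n = i from by omega]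
  · rintro ⟨j, l⟩ hp
    simp only [mem_filter, mem_product, mem_range] at hp
    dsimp only
    rw [show n + (j + l - n) - j = l from by omega]
  · rintro ⟨i, j⟩ hp
    simp only [mem_sigma, mem_range, mem_Icc] at hp
    dsimp only
    rw [show j + (n + i - j) - n = i from by omega]

lemma gh_eq (n : ℕ) (a b c c' : ℕ → ZMod 2) :
    g n a b c + h n a b c' = ∑ p ∈ range n ×ˢ range n,
      a p.1 * b p.2 * (if p.1 + p.2 < n then c (p.1 + p.2) else c' (p.1 + p.2 - n)) := by
  rw [g_eq, h_eq, ← Finset.sum_filter_add_sum_filter_not (range n ×ˢ range n)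
    (fun p => p.1 + p.2 < n)]
  congr 1
  · exact Finset.sum_congr rfl fun p hp => by
      rw [mem_filter] at hp; rw [if_pos hp.2]
  · exact Finset.sum_congr rfl fun p hp => by
      rw [mem_filter] at hp; rw [if_neg hp.2]

lemma sum_range_two_mul (k : ℕ) (f : ℕ → ZMod 2) :
    ∑ i ∈ range (2*k), f i = ∑ i ∈ range k, f i + ∑ i ∈ range k, f (k + i) := by
  rw [range_eq_Ico, ← Finset.sum_Ico_consecutive _ (Nat.zero_le k) (by omega : k ≤ 2*k),
    ← range_eq_Ico, Finset.sum_Ico_eq_sum_range]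
  simp [two_mul]

lemma square (k : ℕ) (f : ℕ → ℕ → ZMod 2) :
    ∑ p ∈ range (2*k) ×ˢ range (2*k), f p.1 p.2 =
      ∑ p ∈ range k ×ˢ range k,
        (f p.1 p.2 + f p.1 (k + p.2) + f (k + p.1) p.2 + f (k + p.1) (k + p.2)) := by
  simp only [Finset.sum_product, sum_range_two_mul, Finset.sum_add_distrib]
  ring

theorem stmt_14 (n k : ℕ) (hn : n = 2 * k) (a b c c' : ℕ → ZMod 2) :
    g n a b c + h n a b c' =
      g k (fun j => a j + a (k + j)) (fun j => b j + b (k + j)) (fun j => c (k + j))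
      + h k (fun j => a j + a (k + j)) (fun j => b j + b (k + j)) (fun j => c' j)
      + g k (fun j => a (k + j)) (fun j => b (k + j)) (fun j => c' j + c (k + j))
      + h k (fun j => a (k + j)) (fun j => b (k + j)) (fun j => c' j + c' (k + j))
      + g k a b (fun j => c j + c (k + j))
      + h k a b (fun j => c' j + c (k + j)) := by
  subst hn
  rw [show ∀ t1 t2 t3 t4 t5 t6 : ZMod 2,
      t1 + t2 + t3 + t4 + t5 + t6 = (t1 + t2) + ((t3 + t4) + (t5 + t6)) from
      fun _ _ _ _ _ _ => by ring]
  rw [gh_eq, gh_eq, gh_eq, gh_eq,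
    square k (fun i j => a i * b j * if i + j < 2*k then c (i+j) else c' (i+j-2*k)), ← Finset.sum_add_distrib, ← Finset.sum_add_distrib]
  apply Finset.sum_congr rfl
  rintro ⟨j, l⟩ hp
  simp only [mem_product, mem_range] at hp
  obtain ⟨hj, hl⟩ := hp
  dsimp only
  rw [if_pos (show j + l < 2*k by omega), if_neg (show ¬ k+j+(k+l) < 2*k by omega),
    show k+j+(k+l)-2*k = j+l by omega,
    show j+(k+l) = k+(j+l) by omega, show k+j+l = k+(j+l) by omega]
  have h2 : (2 : ZMod 2) = 0 := rfl
  by_cases hc : j + l < k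
  · simp only [if_pos (show k+(j+l) < 2*k by omega), if_pos hc]
    linear_combination (-1 : ZMod 2) * (a j * b l * c (k+(j+l)) + a (k+j) * b (k+l) * c (k+(j+l))) * h2
  · simp only [if_neg (show ¬ k+(j+l) < 2*k by omega), if_neg hc]
    rw [show k+(j+l)-2*k = j+l-k by omega, show k+(j+l-k) = j+l by omega]
    linear_combination (-1 : ZMod 2) * (a j * b l * c' (j+l-k) + a (k+j) * b (k+l) * c' (j+l-k)) * h2
end

section
/- Let n be even and g, h as above. Then h(a,b,c') = h(a_L⊕a_R, b_L⊕b_R, c'_L) ⊕ g(a_R, b_R, c'_L) ⊕ h(a_R, b_R, c'_L⊕c'_R) ⊕ h(a_L, b_L, c'_L) in 𝔽₂. -/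
private lemma Icc_pred_eq_Ico (a m : ℕ) (hm : 1 ≤ m) :
    Finset.Icc a (m - 1) = Finset.Ico a m := by
  rw [← Finset.Ico_add_one_right_eq_Icc]; congr 1; omega

/-- Splitting of the double sum defining `h (2k)` into three blocks. -/
private lemma split_sum (k : ℕ) (hk : 1 ≤ k) (f : ℕ → ℕ → ZMod 2) :
    ∑ i ∈ Finset.range (2 * k - 1), ∑ j ∈ Finset.Icc (i + 1) (2 * k - 1), f i j
    = (∑ i ∈ Finset.range (k - 1), ∑ j ∈ Finset.Icc (i + 1) (k - 1), f i j)
      + (∑ i ∈ Finset.range k, ∑ j ∈ Finset.range k, f i (k + j))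
      + (∑ i ∈ Finset.range (k - 1), ∑ j ∈ Finset.Icc (i + 1) (k - 1), f (k + i) (k + j)) := by
  have h2k : 2 * k - 1 = k + (k - 1) := by omega
  rw [h2k, Finset.sum_range_add]
  have step1 : ∀ i ∈ Finset.range k,
      ∑ j ∈ Finset.Icc (i + 1) (k + (k - 1)), f i j
      = (∑ j ∈ Finset.Icc (i + 1) (k - 1), f i j) + ∑ j ∈ Finset.range k, f i (k + j) := by
    intro i hi
    have hi' := Finset.mem_range.mp hi
    have e1 : Finset.Icc (i + 1) (k + (k - 1)) = Finset.Ico (i + 1) (2 * k) := by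
      rw [← Finset.Ico_add_one_right_eq_Icc]; congr 1; omega
    rw [e1, ← Finset.sum_Ico_consecutive (fun j => f i j) (by omega : i + 1 ≤ k)
      (by omega : k ≤ 2 * k), Icc_pred_eq_Ico _ _ hk,
      Finset.sum_Ico_eq_sum_range (fun j => f i j) k (2 * k),
      (by omega : 2 * k - k = k)]
  rw [Finset.sum_congr rfl step1, Finset.sum_add_distrib]
  have e2 : ∑ i ∈ Finset.range k, ∑ j ∈ Finset.Icc (i + 1) (k - 1), f i j
      = ∑ i ∈ Finset.range (k - 1), ∑ j ∈ Finset.Icc (i + 1) (k - 1), f i j := by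
    have hkk : k = (k - 1) + 1 := by omega
    rw [hkk, Finset.sum_range_succ]
    have : Finset.Icc ((k - 1) + 1) ((k-1+1) - 1) = ∅ := by
      apply Finset.Icc_eq_empty; omega
    rw [this]
    simp
  rw [e2]
  have step2 : ∀ i ∈ Finset.range (k - 1),
      ∑ j ∈ Finset.Icc (k + i + 1) (k + (k - 1)), f (k + i) j
      = ∑ j ∈ Finset.Icc (i + 1) (k - 1), f (k + i) (k + j) := by
    intro i hi
    have hi' := Finset.mem_range.mp hi
    have e3 : Finset.Icc (k + i + 1) (k + (k - 1)) = Finset.Ico (k + i + 1) (2 * k) := by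
      rw [← Finset.Ico_add_one_right_eq_Icc]; congr 1; omega
    rw [e3, Finset.sum_Ico_eq_sum_range, Icc_pred_eq_Ico _ _ hk, Finset.sum_Ico_eq_sum_range]
    have hlen : 2 * k - (k + i + 1) = k - (i + 1) := by omega
    rw [hlen]
    apply Finset.sum_congr rfl
    intro t ht
    congr 1
    omega
  rw [Finset.sum_congr rfl step2]

theorem stmt_16 (n k : ℕ) (hn : n = 2 * k) (a b c' : ℕ → ZMod 2) :
    h n a b c' =
      h k (fun j => a j + a (k + j)) (fun j => b j + b (k + j)) (fun j => c' j)
      + g k (fun j => a (k + j)) (fun j => b (k + j)) (fun j => c' j)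
      + h k (fun j => a (k + j)) (fun j => b (k + j)) (fun j => c' j + c' (k + j))
      + h k a b (fun j => c' j) := by
  subst hn
  rcases Nat.eq_zero_or_pos k with hk | hk
  · subst hk; simp [h, g]
  set S1 : ZMod 2 := ∑ i ∈ Finset.range (k - 1), ∑ j ∈ Finset.Icc (i + 1) (k - 1),
    a j * b (2 * k + i - j) * c' i with hS1
  set S2 : ZMod 2 := ∑ i ∈ Finset.range k, ∑ j ∈ Finset.range k,
    a (k + j) * b (k + i - j) * c' i with hS2
  set S3 : ZMod 2 := ∑ i ∈ Finset.range (k - 1), ∑ j ∈ Finset.Icc (i + 1) (k - 1),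
    a (k + j) * b (2 * k + i - j) * c' (k + i) with hS3
  set T1 : ZMod 2 := ∑ i ∈ Finset.range (k - 1), ∑ j ∈ Finset.Icc (i + 1) (k - 1),
    a j * b (k + i - j) * c' i with hT1
  set T3 : ZMod 2 := ∑ i ∈ Finset.range (k - 1), ∑ j ∈ Finset.Icc (i + 1) (k - 1),
    a (k + j) * b (2 * k + i - j) * c' i with hT3
  set U : ZMod 2 := ∑ i ∈ Finset.range (k - 1), ∑ j ∈ Finset.Icc (i + 1) (k - 1),
    a (k + j) * b (k + i - j) * c' i with hU
  set G2 : ZMod 2 := ∑ i ∈ Finset.range k, ∑ j ∈ Finset.range (i + 1),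
    a (k + j) * b (k + i - j) * c' i with hG2
  -- LHS splitting
  have hL : h (2 * k) a b c' = S1 + S2 + S3 := by
    rw [h, split_sum k hk (fun i j => a j * b (2 * k + i - j) * c' i)]
    congr 1
    · congr 1
      apply Finset.sum_congr rfl; intro i hi
      apply Finset.sum_congr rfl; intro j hj
      have hi' := Finset.mem_range.mp hi
      have hj' := Finset.mem_range.mp hj
      have : 2 * k + i - (k + j) = k + i - j := by omega
      rw [this]
    · apply Finset.sum_congr rfl; intro i hi
      apply Finset.sum_congr rfl; intro j hj
      have hi' := Finset.mem_range.mp hi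
      have hj' := (Finset.mem_Icc.mp hj)
      have : 2 * k + (k + i) - (k + j) = 2 * k + i - j := by omega
      rw [this]
  -- first RHS term
  have h1 : h k (fun j => a j + a (k + j)) (fun j => b j + b (k + j)) (fun j => c' j)
      = T1 + S1 + U + T3 := by
    rw [h, hT1, hS1, hU, hT3, ← Finset.sum_add_distrib, ← Finset.sum_add_distrib,
      ← Finset.sum_add_distrib]
    apply Finset.sum_congr rfl; intro i hi
    rw [← Finset.sum_add_distrib, ← Finset.sum_add_distrib, ← Finset.sum_add_distrib]
    apply Finset.sum_congr rfl; intro j hj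
    have hi' := Finset.mem_range.mp hi
    have hj' := Finset.mem_Icc.mp hj
    have e : k + (k + i - j) = 2 * k + i - j := by omega
    simp only [e]
    ring
  -- second RHS term
  have h2 : g k (fun j => a (k + j)) (fun j => b (k + j)) (fun j => c' j) = G2 := by
    rw [g, hG2]
    apply Finset.sum_congr rfl; intro i hi
    apply Finset.sum_congr rfl; intro j hj
    have hj' := Finset.mem_range.mp hj
    have e : k + (i - j) = k + i - j := by omega
    rw [e]
  -- third RHS term
  have h3 : h k (fun j => a (k + j)) (fun j => b (k + j)) (fun j => c' j + c' (k + j))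
      = T3 + S3 := by
    rw [h, hT3, hS3, ← Finset.sum_add_distrib]
    apply Finset.sum_congr rfl; intro i hi
    rw [← Finset.sum_add_distrib]
    apply Finset.sum_congr rfl; intro j hj
    have hi' := Finset.mem_range.mp hi
    have hj' := Finset.mem_Icc.mp hj
    have e : k + (k + i - j) = 2 * k + i - j := by omega
    simp only [e]
    ring
  -- fourth RHS term
  have h4 : h k a b (fun j => c' j) = T1 := rfl
  -- U + G2 = S2
  have hUG : U + G2 = S2 := by
    rw [hU, hG2, hS2]
    have eU : U = ∑ i ∈ Finset.range k, ∑ j ∈ Finset.Icc (i + 1) (k - 1),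
        a (k + j) * b (k + i - j) * c' i := by
      rw [hU]
      apply Finset.sum_subset (Finset.range_subset_range.mpr (by omega : k - 1 ≤ k))
      intro x hx hnx
      have hx' := Finset.mem_range.mp hx
      have hnx' : ¬ x < k - 1 := fun hc => hnx (Finset.mem_range.mpr hc)
      have : Finset.Icc (x + 1) (k - 1) = ∅ := Finset.Icc_eq_empty (by omega)
      rw [this, Finset.sum_empty]
    rw [← hU, eU, ← Finset.sum_add_distrib]
    apply Finset.sum_congr rfl; intro i hi
    have hi' := Finset.mem_range.mp hi
    rw [add_comm, Icc_pred_eq_Ico _ _ hk]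
    simp only [Finset.range_eq_Ico]
    exact Finset.sum_Ico_consecutive (fun j => a (k + j) * b (k + i - j) * c' i)
      (by omega) (by omega)
  rw [hL, h1, h2, h3, h4, ← hUG]
  have two : ∀ x : ZMod 2, x + x = 0 := fun x => by
    have : (2 : ZMod 2) = 0 := rfl
    calc x + x = 2 * x := by ring
    _ = 0 := by rw [this, zero_mul]
  calc S1 + (U + G2) + S3
      = (S1 + U + G2 + S3) + (T1 + T1) + (T3 + T3) := by rw [two T1, two T3]; ring
    _ = T1 + S1 + U + T3 + G2 + (T3 + S3) + T1 := by ring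
end

section
/- Let n be even and g, h as above. Then g(a,b,c) = g(a_L⊕a_R, b_L⊕b_R, c_R) ⊕ g(a_R, b_R, c_R) ⊕ g(a_L, b_L, c_L⊕c_R) ⊕ h(a_L, b_L, c_R) in 𝔽₂. -/
theorem stmt_17 (n k : ℕ) (hn : n = 2 * k) (a b c : ℕ → ZMod 2) :
    g n a b c =
      g k (fun j => a j + a (k + j)) (fun j => b j + b (k + j)) (fun j => c (k + j))
      + g k (fun j => a (k + j)) (fun j => b (k + j)) (fun j => c (k + j))
      + g k a b (fun j => c j + c (k + j))
      + h k a b (fun j => c (k + j)) := by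
  subst hn
  cases k with
  | zero => simp [g, h]
  | succ m =>
  simp only [g, h, Nat.add_sub_cancel]
  rw [two_mul, Finset.sum_range_add]
  have hext : (∑ i ∈ Finset.range m, ∑ j ∈ Finset.Icc (i + 1) m,
        a j * b (m + 1 + i - j) * c (m + 1 + i))
      = ∑ i ∈ Finset.range (m + 1), ∑ j ∈ Finset.Icc (i + 1) m,
        a j * b (m + 1 + i - j) * c (m + 1 + i) := by
    rw [Finset.sum_range_succ, Finset.Icc_eq_empty (by omega)]
    simp
  rw [hext, ← Finset.sum_add_distrib, ← Finset.sum_add_distrib, ← Finset.sum_add_distrib,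
      ← Finset.sum_add_distrib]
  refine Finset.sum_congr rfl fun i hi => ?_
  rw [Finset.mem_range] at hi
  -- split T2
  have s1 := Finset.sum_range_add (fun j => a j * b (m + 1 + i - j) * c (m + 1 + i)) (m + 1) (i + 1)
  rw [show m + 1 + (i + 1) = m + 1 + i + 1 by ring] at s1
  have s2 := Finset.sum_range_add (fun j => a j * b (m + 1 + i - j) * c (m + 1 + i)) (i + 1) (m - i)
  rw [show i + 1 + (m - i) = m + 1 by omega] at s2
  have s3 : (∑ x ∈ Finset.range (i + 1), a (m + 1 + x) * b (m + 1 + i - (m + 1 + x)) * c (m + 1 + i))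
      = ∑ x ∈ Finset.range (i + 1), a (m + 1 + x) * b (i - x) * c (m + 1 + i) := by
    refine Finset.sum_congr rfl fun x hx => ?_
    rw [Finset.mem_range] at hx
    rw [show m + 1 + i - (m + 1 + x) = i - x by omega]
  have hH : (∑ j ∈ Finset.Icc (i + 1) m, a j * b (m + 1 + i - j) * c (m + 1 + i))
      = ∑ x ∈ Finset.range (m - i), a (i + 1 + x) * b (m + 1 + i - (i + 1 + x)) * c (m + 1 + i) := by
    rw [← Finset.Ico_add_one_right_eq_Icc, Finset.sum_Ico_eq_sum_range,
      show m + 1 - (i + 1) = m - i by omega]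
  have key : (∑ j ∈ Finset.range (i + 1), a j * b (i - j) * c i)
        + (∑ j ∈ Finset.range (i + 1), a j * b (m + 1 + i - j) * c (m + 1 + i))
        + (∑ x ∈ Finset.range (i + 1), a (m + 1 + x) * b (i - x) * c (m + 1 + i))
      = ∑ x ∈ Finset.range (i + 1), (a x + a (m + 1 + x)) * (b (i - x) + b (m + 1 + (i - x))) * c (m + 1 + i) +
          ∑ x ∈ Finset.range (i + 1), a (m + 1 + x) * b (m + 1 + (i - x)) * c (m + 1 + i) +
        ∑ x ∈ Finset.range (i + 1), a x * b (i - x) * (c i + c (m + 1 + i)) := by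
    rw [← Finset.sum_add_distrib, ← Finset.sum_add_distrib, ← Finset.sum_add_distrib,
        ← Finset.sum_add_distrib]
    refine Finset.sum_congr rfl fun j hj => ?_
    rw [Finset.mem_range] at hj
    rw [show m + 1 + (i - j) = m + 1 + i - j by omega]
    generalize a j = x1
    generalize a (m + 1 + j) = x2
    generalize b (i - j) = x3
    generalize b (m + 1 + i - j) = x4
    generalize c i = x5
    generalize c (m + 1 + i) = x6
    revert x1 x2 x3 x4 x5 x6
    decide
  linear_combination s1 + s2 + s3 - hH + key
end
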